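/- arXiv:1409.1206 — 3 statements merged into one kernel-verified Lean document; each statement's English description precedes it below -/
import Mathlib

section
/- Let ℒ be the Laplace transform on L²(ℝ₊), (ℒf)(t) = ∫₀^∞ e^{-xt} f(x) dx, and let U : L²(ℝ₊) → L²(ℝ) be the unitary operator (Uf)(x) = e^{x/2} f(e^x). Then U ℒ² U* is the operator of convolution with the function x ↦ 1/(2 cosh(x/2)); equivalently, the Carleman operator (the integral operator on L²(ℝ₊) with kernel 1/(t+s)) is unitarily equivalent via U to convolution with 1/(2 cosh(x/2)) on L²(ℝ). -/
open MeasureTheory Real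


lemma aux_exp_qmp : Measure.QuasiMeasurePreserving Real.exp (volume : Measure ℝ)
    (volume.restrict (Set.Ioi (0:ℝ))) := by
  refine ⟨Real.measurable_exp, Measure.AbsolutelyContinuous.mk fun N hN h0 => ?_⟩
  rw [Measure.restrict_apply hN] at h0
  rw [Measure.map_apply Real.measurable_exp hN]
  have himg : Real.exp ⁻¹' N ⊆ Real.log '' (N ∩ Set.Ioi 0) := fun x hx =>
    ⟨Real.exp x, ⟨hx, Real.exp_pos x⟩, Real.log_exp x⟩
  refine measure_mono_null himg ?_
  exact addHaar_image_eq_zero_of_differentiableOn_of_addHaar_eq_zero volume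
    (Real.differentiableOn_log.mono fun x hx => ne_of_gt hx.2) h0

lemma aux_integrableOn_exp {a : ℝ} (ha : 0 < a) :
    IntegrableOn (fun x : ℝ => Real.exp (-(a * x))) (Set.Ioi 0) := by
  simpa [neg_mul] using exp_neg_integrableOn_Ioi 0 ha

lemma aux_integral_exp {a : ℝ} (ha : 0 < a) :
    ∫ x in Set.Ioi (0:ℝ), Real.exp (-(a * x)) = a⁻¹ := by
  have := integral_comp_mul_left_Ioi (fun x => Real.exp (-x)) 0 ha
  simp only [mul_zero, integral_exp_neg_Ioi, neg_zero, Real.exp_zero, smul_eq_mul, mul_one] at this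
  simpa using this

lemma aux_mul_int {𝕜 : Type*} [RCLike 𝕜] {m : Measure ℝ} {φ ψ : ℝ → 𝕜}
    (hφ : MemLp φ 2 m) (hψ : MemLp ψ 2 m) :
    Integrable (fun s => φ s * ψ s) m := by
  have h := hψ.smul hφ (p := 2) (q := 2) (r := 1)
  rw [memLp_one_iff_integrable] at h
  exact h

lemma aux_mem2_exp_real {a : ℝ} (ha : 0 < a) :
    MemLp (fun s : ℝ => Real.exp (-(a * s))) 2 (volume.restrict (Set.Ioi 0)) := by
  refine (memLp_two_iff_integrable_sq ?_).mpr ?_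
  · exact (Real.continuous_exp.comp (by continuity)).aestronglyMeasurable
  · have heq : (fun s : ℝ => Real.exp (-(a * s)) ^ 2) = fun s : ℝ => Real.exp (-((2*a) * s)) := by
      ext s
      rw [sq, ← Real.exp_add]
      ring_nf
    rw [heq]
    exact aux_integrableOn_exp (by linarith)

lemma aux_mem2_inv_real {t : ℝ} (ht : 0 < t) :
    MemLp (fun s : ℝ => (t + s)⁻¹) 2 (volume.restrict (Set.Ioi 0)) := by
  refine (memLp_two_iff_integrable_sq ?_).mpr ?_
  · exact (Measurable.inv (measurable_const.add measurable_id)).aestronglyMeasurable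
  · have hmp : MeasurePreserving (fun s : ℝ => t + s)
        (volume.restrict (Set.Ioi (0:ℝ))) (volume.restrict (Set.Ioi t)) := by
      have h1 := (measurePreserving_add_left (volume : Measure ℝ) t).restrict_preimage
        (s := Set.Ioi t) measurableSet_Ioi
      simpa using h1
    have hint : IntegrableOn (fun u : ℝ => (u⁻¹) ^ 2) (Set.Ioi t) := by
      have := integrableOn_Ioi_rpow_of_lt (show (-2:ℝ) < -1 by norm_num) ht
      refine this.congr_fun (fun u hu => ?_) measurableSet_Ioi
      have hu0 : (0:ℝ) < u := lt_trans ht hu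
      show u ^ (-2:ℝ) = u⁻¹ ^ 2
      rw [show (-2:ℝ) = -((2:ℕ):ℝ) by norm_num, Real.rpow_neg hu0.le, Real.rpow_natCast]
      simp [inv_pow]
    have hemb : MeasurableEmbedding (fun s : ℝ => t + s) :=
      (MeasurableEquiv.addLeft t).measurableEmbedding
    exact (hmp.integrable_comp_emb hemb (g := fun u : ℝ => (u⁻¹) ^ 2)).mpr hint


lemma aux_fubini (t : ℝ) (ht : 0 < t) (g : Lp ℂ 2 (volume.restrict (Set.Ioi (0:ℝ)))) :
    (∫ x in Set.Ioi (0:ℝ), Complex.exp (-(x * t)) *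
        ∫ s in Set.Ioi (0:ℝ), Complex.exp (-(s * x)) * g s)
      = ∫ s in Set.Ioi (0:ℝ), (((t + s : ℝ)) : ℂ)⁻¹ * g s := by
  set F : ℝ → ℝ → ℂ := fun x s => ((Real.exp (-((t + s) * x)) : ℝ) : ℂ) * g s with hF
  have hker : ∀ x s : ℝ, Complex.exp (-(x * t)) * (Complex.exp (-(s * x)) * g s) = F x s := by
    intro x s
    rw [hF, ← mul_assoc, ← Complex.exp_add]
    congr 2
    push_cast
    ring_nf
  have hFmeas : AEStronglyMeasurable (Function.uncurry F) ((volume.restrict (Set.Ioi (0:ℝ))).prod (volume.restrict (Set.Ioi (0:ℝ)))) := by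
    apply AEStronglyMeasurable.mul
    · exact (Complex.continuous_ofReal.comp (by fun_prop)).aestronglyMeasurable
    · exact (Lp.aestronglyMeasurable g).comp_quasiMeasurePreserving
        Measure.quasiMeasurePreserving_snd
  have hFint : Integrable (Function.uncurry F) ((volume.restrict (Set.Ioi (0:ℝ))).prod (volume.restrict (Set.Ioi (0:ℝ)))) := by
    rw [integrable_prod_iff' hFmeas]
    constructor
    · filter_upwards [ae_restrict_mem measurableSet_Ioi] with s hs
      have hts : (0:ℝ) < t + s := by
        simp only [Set.mem_Ioi] at hs; linarith
      exact ((aux_integrableOn_exp hts).ofReal (𝕜 := ℂ)).mul_const (g s)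
    · have target : Integrable (fun s : ℝ => (t + s)⁻¹ * ‖g s‖) (volume.restrict (Set.Ioi (0:ℝ))) :=
        aux_mul_int (aux_mem2_inv_real ht) (Lp.memLp g).norm
      refine target.congr ?_
      filter_upwards [ae_restrict_mem measurableSet_Ioi] with s hs
      have hts : (0:ℝ) < t + s := by
        simp only [Set.mem_Ioi] at hs; linarith
      have : ∀ x : ℝ, ‖Function.uncurry F (x, s)‖ = Real.exp (-((t + s) * x)) * ‖g s‖ := by
        intro x
        simp only [Function.uncurry, hF, norm_mul, Complex.norm_real,
          Real.norm_eq_abs, abs_of_pos (Real.exp_pos _)]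
      simp only [this]
      rw [integral_mul_const, aux_integral_exp hts]
  calc (∫ x in Set.Ioi (0:ℝ), Complex.exp (-(x * t)) *
        ∫ s in Set.Ioi (0:ℝ), Complex.exp (-(s * x)) * g s)
      = ∫ x in Set.Ioi (0:ℝ), ∫ s in Set.Ioi (0:ℝ), F x s := by
        refine integral_congr_ae (Filter.Eventually.of_forall fun x => ?_)
        simp only []
        rw [← integral_const_mul]
        exact integral_congr_ae (Filter.Eventually.of_forall fun s => hker x s)
    _ = ∫ s in Set.Ioi (0:ℝ), ∫ x in Set.Ioi (0:ℝ), F x s := integral_integral_swap hFint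
    _ = ∫ s in Set.Ioi (0:ℝ), (((t + s : ℝ)) : ℂ)⁻¹ * g s := by
        refine integral_congr_ae ?_
        filter_upwards [ae_restrict_mem measurableSet_Ioi] with s hs
        have hts : (0:ℝ) < t + s := by
          simp only [Set.mem_Ioi] at hs; linarith
        rw [hF]
        simp only
        rw [integral_mul_const]
        congr 1
        rw [show ((↑(t + s) : ℂ))⁻¹ = (((t + s)⁻¹ : ℝ) : ℂ) by push_cast; ring,
          ← aux_integral_exp hts]
        exact integral_ofReal


lemma aux_kernel (x y : ℝ) :
    Real.exp (x/2) * (Real.exp (y/2) * (Real.exp x + Real.exp y)⁻¹)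
      = (2 * Real.cosh ((x-y)/2))⁻¹ := by
  have h1 : 2 * Real.cosh ((x-y)/2) = Real.exp ((x-y)/2) + Real.exp (-((x-y)/2)) := by
    rw [Real.cosh_eq]; ring
  have h2 : Real.exp (x/2) * Real.exp (y/2) *
      (Real.exp ((x-y)/2) + Real.exp (-((x-y)/2))) = Real.exp x + Real.exp y := by
    rw [mul_add, ← Real.exp_add, ← Real.exp_add, ← Real.exp_add]
    congr 1
    · exact congrArg Real.exp (by ring)
    · exact congrArg Real.exp (by ring)
  have hpos : (0:ℝ) < Real.exp x + Real.exp y := by positivity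
  have hpos2 : (0:ℝ) < Real.exp ((x-y)/2) + Real.exp (-((x-y)/2)) := by positivity
  rw [h1, ← h2]
  field_simp


/-- Formula (3.5) of Frank–Pushnitski, *The spectral density of a product of spectral
projections*:  if `ℒ` is the Laplace transform on `L²(ℝ₊)` (so that `ℒ²` is the Carleman
operator, the integral operator with kernel `1/(t+s)`), `U : L²(ℝ₊) → L²(ℝ)` is the unitary
operator `(Uf)(x) = e^{x/2} f(eˣ)`, and `B` is the operator of convolution with
`x ↦ 1/(2 cosh(x/2))` on `L²(ℝ)`, then `U ℒ² U⁻¹ = B`. -/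
theorem statement8
    (L : Lp ℂ 2 (volume.restrict (Set.Ioi (0:ℝ))) →L[ℂ]
         Lp ℂ 2 (volume.restrict (Set.Ioi (0:ℝ))))
    (hL : ∀ f : Lp ℂ 2 (volume.restrict (Set.Ioi (0:ℝ))),
      (L f : ℝ → ℂ) =ᵐ[volume.restrict (Set.Ioi (0:ℝ))]
        fun t => ∫ x in Set.Ioi (0:ℝ), Complex.exp (-(x * t)) * f x)
    (U : Lp ℂ 2 (volume.restrict (Set.Ioi (0:ℝ))) ≃ₗᵢ[ℂ] Lp ℂ 2 (volume : Measure ℝ))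
    (hU : ∀ f : Lp ℂ 2 (volume.restrict (Set.Ioi (0:ℝ))),
      (U f : ℝ → ℂ) =ᵐ[(volume : Measure ℝ)]
        fun x => ((Real.exp (x / 2) : ℝ) : ℂ) * f (Real.exp x))
    (B : Lp ℂ 2 (volume : Measure ℝ) →L[ℂ] Lp ℂ 2 (volume : Measure ℝ))
    (hB : ∀ f : Lp ℂ 2 (volume : Measure ℝ),
      (B f : ℝ → ℂ) =ᵐ[(volume : Measure ℝ)]
        fun x => ∫ y : ℝ, (((2 * Real.cosh (y / 2))⁻¹ : ℝ) : ℂ) * f (x - y)) :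
    ∀ f : Lp ℂ 2 (volume : Measure ℝ), U (L (L (U.symm f))) = B f := by
  intro f
  apply Lp.ext
  -- the relation between f and g := U.symm f
  have hfg : (f : ℝ → ℂ) =ᵐ[(volume : Measure ℝ)]
      fun y => ((Real.exp (y / 2) : ℝ) : ℂ) * (U.symm f) (Real.exp y) := by
    have h := hU (U.symm f)
    rwa [U.apply_symm_apply] at h
  -- a.e. description of L (L (U.symm f)) on Ioi 0
  have hk : (L (L (U.symm f)) : ℝ → ℂ) =ᵐ[volume.restrict (Set.Ioi (0:ℝ))]
      fun t => ∫ s in Set.Ioi (0:ℝ), (((t + s : ℝ)) : ℂ)⁻¹ * (U.symm f) s := by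
    filter_upwards [hL (L (U.symm f)), ae_restrict_mem measurableSet_Ioi] with t h1 h2
    rw [h1, ← aux_fubini t h2 (U.symm f)]
    refine integral_congr_ae ?_
    filter_upwards [hL (U.symm f)] with x hx2
    rw [hx2]
  -- pull back along exp
  have hk2 : (fun x : ℝ => (L (L (U.symm f)) : ℝ → ℂ) (Real.exp x)) =ᵐ[(volume : Measure ℝ)]
      fun x => ∫ s in Set.Ioi (0:ℝ), (((Real.exp x + s : ℝ)) : ℂ)⁻¹ * (U.symm f) s :=
    aux_exp_qmp.ae_eq_comp hk
  -- change of variables in the s-integral + hfg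
  have hchg : ∀ x : ℝ,
      (∫ s in Set.Ioi (0:ℝ), (((Real.exp x + s : ℝ)) : ℂ)⁻¹ * (U.symm f) s)
        = ∫ y : ℝ, (Real.exp y : ℝ) •
            ((((Real.exp x + Real.exp y : ℝ)) : ℂ)⁻¹ * (U.symm f) (Real.exp y)) := by
    intro x
    have himg : Real.exp '' Set.univ = Set.Ioi (0:ℝ) := by
      rw [Set.image_univ, Real.range_exp]
    have h := integral_image_eq_integral_abs_deriv_smul MeasurableSet.univ
        (fun y (_ : y ∈ Set.univ) => (Real.hasDerivAt_exp y).hasDerivWithinAt)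
        (Real.exp_injective.injOn)
        (fun s => (((Real.exp x + s : ℝ)) : ℂ)⁻¹ * (U.symm f) s)
    rw [himg, Measure.restrict_univ] at h
    rw [h]
    refine integral_congr_ae (Filter.Eventually.of_forall fun y => ?_)
    simp only [abs_of_pos (Real.exp_pos y)]
  -- final identification with the convolution kernel
  have hBf := hB f
  refine ((hU (L (L (U.symm f)))).trans ?_).trans hBf.symm
  have key : ∀ᵐ x : ℝ ∂(volume : Measure ℝ),
      ((Real.exp (x / 2) : ℝ) : ℂ) * (L (L (U.symm f)) : ℝ → ℂ) (Real.exp x)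
        = ∫ y : ℝ, (((2 * Real.cosh (y / 2))⁻¹ : ℝ) : ℂ) * f (x - y) := by
    filter_upwards [hk2] with x hx
    rw [hx, hchg x]
    -- move the constant inside and rewrite the integrand a.e. using hfg
    rw [← integral_const_mul]
    have step1 : (∫ y : ℝ, ((Real.exp (x / 2) : ℝ) : ℂ) * ((Real.exp y : ℝ) •
            ((((Real.exp x + Real.exp y : ℝ)) : ℂ)⁻¹ * (U.symm f) (Real.exp y))))
        = ∫ y : ℝ, (((2 * Real.cosh ((x - y) / 2))⁻¹ : ℝ) : ℂ) * f y := by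
      refine integral_congr_ae (hfg.mono fun y hy => ?_)
      simp only [] at hy ⊢
      have h2 : ((Real.exp y : ℝ) : ℂ) = ((Real.exp (y/2) : ℝ) : ℂ) * ((Real.exp (y/2) : ℝ) : ℂ) := by
        rw [← Complex.ofReal_mul, ← Real.exp_add]
        norm_num
      rw [Complex.real_smul, h2, ← aux_kernel x y, hy]
      push_cast [Complex.ofReal_exp]
      ring
    rw [step1]
    -- convolution form: substitute y ↦ x - y
    have := integral_sub_left_eq_self
      (fun y : ℝ => (((2 * Real.cosh (y / 2))⁻¹ : ℝ) : ℂ) * f (x - y)) volume x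
    rw [← this]
    refine integral_congr_ae (Filter.Eventually.of_forall fun y => ?_)
    simp only [sub_sub_cancel]
  exact key
end

section
/- For every a with 0 ≤ a ≤ 1, (1/2π) ∫_{-∞}^{∞} ln( 1 − a² / cosh²(πx) ) dx = −(1/π²) arcsin²(a). -/
open scoped Real
open MeasureTheory Filter Set Topology

namespace Stmt14


lemma cosh_pi_one_le (x : ℝ) : 1 ≤ Real.cosh (π * x) := Real.one_le_cosh _

lemma cosh_pi_pos (x : ℝ) : 0 < Real.cosh (π * x) := Real.cosh_pos _

lemma cosh_sq_pos (x : ℝ) : 0 < Real.cosh (π * x) ^ 2 := by positivity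

lemma continuous_cosh_pi : Continuous (fun x : ℝ => Real.cosh (π * x)) :=
  Real.continuous_cosh.comp (continuous_const.mul continuous_id)

/-- even + integrable on `Ioi 0` implies integrable. -/
lemma integrable_of_even {f : ℝ → ℝ} (hev : ∀ x, f (-x) = f x)
    (h : IntegrableOn f (Ioi 0)) : Integrable f := by
  have int_Iic : IntegrableOn f (Iic 0) := by
    rw [← Measure.map_neg_eq_self (volume : Measure ℝ)]
    have m : MeasurableEmbedding fun x : ℝ => -x :=
      (Homeomorph.neg ℝ).measurableEmbedding
    rw [m.integrableOn_map_iff]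
    simp_rw [Function.comp_def, hev, neg_preimage, neg_Iic, neg_zero]
    exact Iff.mpr integrableOn_Ici_iff_integrableOn_Ioi h
  rw [← integrableOn_univ, ← Set.Iic_union_Ioi (a := (0:ℝ))]
  exact int_Iic.union h

lemma integrable_sech_sq : Integrable (fun x : ℝ => 1 / Real.cosh (π * x) ^ 2) := by
  apply integrable_of_even (by intro x; rw [mul_neg, Real.cosh_neg])
  have hg : IntegrableOn (fun x : ℝ => 4 * Real.exp (-(2*π) * x)) (Ioi 0) :=
    (exp_neg_integrableOn_Ioi 0 (by positivity)).const_mul 4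
  apply hg.mono' ((continuous_const.div (continuous_cosh_pi.pow 2)
    (fun x => (cosh_sq_pos x).ne')).aestronglyMeasurable.restrict)
  filter_upwards [ae_restrict_mem measurableSet_Ioi] with x hx
  simp only [Pi.div_apply, Pi.pow_apply]
  have hx0 : (0:ℝ) < x := hx
  have h1 : Real.exp (π * x) / 2 ≤ Real.cosh (π * x) := by
    rw [Real.cosh_eq]
    have := Real.exp_pos (-(π * x))
    linarith
  have h2 : Real.exp (π * x) ^ 2 / 4 ≤ Real.cosh (π * x) ^ 2 := by
    calc Real.exp (π * x) ^ 2 / 4 = (Real.exp (π * x) / 2) ^ 2 := by ring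
    _ ≤ _ := by
        apply pow_le_pow_left₀ (by positivity) h1
  rw [Real.norm_eq_abs, abs_of_pos (by positivity)]
  rw [div_le_iff₀ (cosh_sq_pos x)]
  calc (1:ℝ) = (4 * Real.exp (-(2*π)*x)) * (Real.exp (π * x) ^ 2 / 4) := by
        rw [show (4 * Real.exp (-(2*π)*x)) * (Real.exp (π * x) ^ 2 / 4)
            = Real.exp (-(2*π)*x) * Real.exp (π * x) ^ 2 from by ring, sq,
          ← Real.exp_add, ← Real.exp_add,
          show (-(2*π)*x) + (π*x + π*x) = 0 from by ring, Real.exp_zero]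
  _ ≤ _ := mul_le_mul_of_nonneg_left h2 (by positivity)




lemma tanh_eq (y : ℝ) : Real.tanh y = 1 - 2 / (Real.exp (2*y) + 1) := by
  have h1 : Real.exp y > 0 := Real.exp_pos y
  have h2 : Real.exp (-y) > 0 := Real.exp_pos (-y)
  have h3 : Real.exp (2*y) = Real.exp y * Real.exp y := by
    rw [← Real.exp_add]; ring_nf
  rw [Real.tanh_eq_sinh_div_cosh, Real.sinh_eq, Real.cosh_eq, h3]
  have h4 : Real.exp y * Real.exp (-y) = 1 := by
    rw [← Real.exp_add, add_neg_cancel, Real.exp_zero]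
  field_simp
  nlinarith [h4]

lemma tendsto_tanh_atTop : Tendsto Real.tanh atTop (𝓝 1) := by
  have h : Tendsto (fun y : ℝ => 1 - 2 / (Real.exp (2*y) + 1)) atTop (𝓝 1) := by
    have h2 : Tendsto (fun y : ℝ => Real.exp (2*y) + 1) atTop atTop :=
      (Real.tendsto_exp_atTop.comp (tendsto_id.const_mul_atTop two_pos)).atTop_add
        tendsto_const_nhds
    have := (tendsto_const_nhds (x := (2:ℝ))).div_atTop h2
    simpa using tendsto_const_nhds.sub this
  simpa [← tanh_eq] using h

lemma tendsto_tanh_atBot : Tendsto Real.tanh atBot (𝓝 (-1)) := by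
  have h : Tendsto (fun y : ℝ => 1 - 2 / (Real.exp (2*y) + 1)) atBot (𝓝 (1 - 2 / (0 + 1))) := by
    apply tendsto_const_nhds.sub
    apply Tendsto.div tendsto_const_nhds
    · exact (Real.tendsto_exp_atBot.comp (tendsto_id.const_mul_atBot two_pos)).add tendsto_const_nhds
    · norm_num
  norm_num at h
  simpa [← tanh_eq] using h

lemma hasDerivAt_tanh (y : ℝ) : HasDerivAt Real.tanh (1 / Real.cosh y ^ 2) y := by
  have h := ((Real.hasDerivAt_sinh y).div (Real.hasDerivAt_cosh y) (Real.cosh_pos y).ne')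
  have : (Real.cosh y * Real.cosh y - Real.sinh y * Real.sinh y) / Real.cosh y ^ 2
      = 1 / Real.cosh y ^ 2 := by
    rw [show Real.cosh y * Real.cosh y - Real.sinh y * Real.sinh y
        = Real.cosh y ^ 2 - Real.sinh y ^ 2 from by ring, Real.cosh_sq_sub_sinh_sq]
  rw [← this]
  exact h.congr_deriv rfl |>.congr_of_eventuallyEq
    (by filter_upwards with t using (Real.tanh_eq_sinh_div_cosh t))



lemma sub_sq_pos (a : ℝ) (h1 : a ^ 2 < 1) (x : ℝ) :
    0 < Real.cosh (π * x) ^ 2 - a ^ 2 := by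
  have h := cosh_pi_one_le x
  nlinarith

lemma integral_inner (a : ℝ) (h0 : 0 ≤ a) (h1 : a < 1) :
    ∫ x : ℝ, -(2*a) / (Real.cosh (π*x) ^ 2 - a ^ 2)
      = -(4/π) * Real.arcsin a / Real.sqrt (1 - a ^ 2) := by
  have ha2 : a ^ 2 < 1 := by nlinarith
  set c := Real.sqrt (1 - a ^ 2) with hc
  have hc2 : c ^ 2 = 1 - a ^ 2 := Real.sq_sqrt (by nlinarith)
  have hc0 : 0 < c := Real.sqrt_pos.2 (by nlinarith)
  set G : ℝ → ℝ := fun x => -(2/(π*c)) * Real.arctan ((a/c) * Real.tanh (π*x)) with hG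
  have hderiv : ∀ x, HasDerivAt G (-(2*a) / (Real.cosh (π*x) ^ 2 - a ^ 2)) x := by
    intro x
    have hπ : HasDerivAt (fun x : ℝ => π * x) π x := by
      simpa using (hasDerivAt_id x).const_mul π
    have h2 : HasDerivAt (fun x : ℝ => Real.tanh (π*x))
        (1 / Real.cosh (π*x) ^ 2 * π) x := (hasDerivAt_tanh (π*x)).comp x hπ
    have h3 := h2.const_mul (a/c)
    have h4 := (Real.hasDerivAt_arctan ((a/c) * Real.tanh (π*x))).comp x h3
    have h5 := h4.const_mul (-(2/(π*c)))
    refine h5.congr_deriv ?_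
    symm
    have hC := cosh_pi_pos x
    have hCa := sub_sq_pos a ha2 x
    have hS : Real.sinh (π*x) ^ 2 = Real.cosh (π*x) ^ 2 - 1 := by
      have := Real.cosh_sq_sub_sinh_sq (π*x)
      linarith
    rw [Real.tanh_eq_sinh_div_cosh]
    have hden : 1 + (a / c * (Real.sinh (π*x) / Real.cosh (π*x))) ^ 2 > 0 := by positivity
    field_simp
    ring_nf
    linear_combination (-(a*Real.cosh (π*x)^2)) * hc2 + (-a^3) * hS
  have hint : Integrable (fun x : ℝ => -(2*a) / (Real.cosh (π*x) ^ 2 - a ^ 2)) := by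
    apply ((integrable_sech_sq.const_mul (2*a/(1-a^2))).mono' ?_ ?_)
    · apply Continuous.aestronglyMeasurable
      exact continuous_const.div (by continuity) (fun x => (sub_sq_pos a ha2 x).ne')
    · filter_upwards with x
      have hCa := sub_sq_pos a ha2 x
      have hC2 := cosh_pi_pos x
      have hkey : (1 - a^2) * Real.cosh (π*x) ^ 2 ≤ Real.cosh (π*x) ^ 2 - a ^ 2 := by
        nlinarith [mul_nonneg (sq_nonneg a)
          (by nlinarith [cosh_pi_one_le x] : (0:ℝ) ≤ Real.cosh (π*x) ^ 2 - 1)]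
      rw [Real.norm_eq_abs, abs_div, abs_of_nonpos (by linarith : -(2*a) ≤ 0),
        abs_of_pos hCa, neg_neg]
      rw [div_le_iff₀ hCa]
      have h1a : 0 < 1 - a ^ 2 := by nlinarith
      calc 2*a = (2*a/(1-a^2)) * (1/(Real.cosh (π*x)^2)) * ((1-a^2) * Real.cosh (π*x)^2) := by
            field_simp
      _ ≤ _ := by
          apply mul_le_mul_of_nonneg_left hkey (by positivity)
  have hπtop : Tendsto (fun x : ℝ => π * x) atTop atTop :=
    tendsto_id.const_mul_atTop Real.pi_pos
  have hπbot : Tendsto (fun x : ℝ => π * x) atBot atBot :=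
    tendsto_id.const_mul_atBot Real.pi_pos
  have htop : Tendsto G atTop (𝓝 (-(2/(π*c)) * Real.arctan ((a/c) * 1))) := by
    have t1 : Tendsto (fun x : ℝ => (a/c) * Real.tanh (π*x)) atTop (𝓝 ((a/c) * 1)) :=
      (tendsto_tanh_atTop.comp hπtop).const_mul (a/c)
    exact ((Real.continuous_arctan.tendsto _).comp t1).const_mul (-(2/(π*c)))
  have hbot : Tendsto G atBot (𝓝 (-(2/(π*c)) * Real.arctan ((a/c) * (-1)))) := by
    have t1 : Tendsto (fun x : ℝ => (a/c) * Real.tanh (π*x)) atBot (𝓝 ((a/c) * (-1))) :=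
      (tendsto_tanh_atBot.comp hπbot).const_mul (a/c)
    exact ((Real.continuous_arctan.tendsto _).comp t1).const_mul (-(2/(π*c)))
  rw [integral_of_hasDerivAt_of_tendsto hderiv hint hbot htop]
  have harcsin : Real.arcsin a = Real.arctan (a / c) :=
    Real.arcsin_eq_arctan (by constructor <;> nlinarith)
  rw [mul_neg_one, Real.arctan_neg, mul_one, harcsin]
  field_simp
  ring



lemma arg_pos (a : ℝ) (h1 : a ^ 2 < 1) (x : ℝ) :
    0 < 1 - a ^ 2 / Real.cosh (π * x) ^ 2 := by
  have h2 := sub_sq_pos a h1 x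
  have h3 := cosh_pi_pos x
  rw [sub_pos, div_lt_one (by positivity)]
  linarith

lemma continuous_f (a : ℝ) (h1 : a ^ 2 < 1) :
    Continuous (fun x : ℝ => Real.log (1 - a ^ 2 / Real.cosh (π * x) ^ 2)) := by
  apply Continuous.log
  · exact continuous_const.sub (continuous_const.div (continuous_cosh_pi.pow 2)
      (fun x => (by positivity : (0:ℝ) < Real.cosh (π*x) ^ 2).ne'))
  · exact fun x => (arg_pos a h1 x).ne'

lemma neg_log_le (t : ℝ) (h0 : 0 ≤ t) (h1 : t < 1) : -Real.log (1 - t) ≤ t / (1 - t) := by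
  have hp : 0 < 1 - t := by linarith
  have hlog := Real.log_le_sub_one_of_pos (x := (1-t)⁻¹) (by positivity)
  rw [Real.log_inv] at hlog
  have h2 : (1-t)⁻¹ - 1 = t/(1-t) := by field_simp; ring
  linarith

lemma f_integrable (a : ℝ) (h1 : a ^ 2 < 1) :
    Integrable (fun x : ℝ => Real.log (1 - a ^ 2 / Real.cosh (π * x) ^ 2)) := by
  apply (integrable_sech_sq.const_mul (a^2/(1-a^2))).mono'
    (continuous_f a h1).aestronglyMeasurable
  filter_upwards with x
  have hC := cosh_pi_pos x
  have hC2 : (0:ℝ) < Real.cosh (π*x) ^ 2 := by positivity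
  have hpos := arg_pos a h1 x
  have ht0 : (0:ℝ) ≤ a ^ 2 / Real.cosh (π*x) ^ 2 := by positivity
  have ht1 : a ^ 2 / Real.cosh (π*x) ^ 2 < 1 := by linarith
  have hle1 : 1 - a ^ 2 / Real.cosh (π*x) ^ 2 ≤ 1 := by linarith
  have hlog0 : Real.log (1 - a ^ 2 / Real.cosh (π*x) ^ 2) ≤ 0 :=
    Real.log_nonpos (by linarith) hle1
  rw [Real.norm_eq_abs, abs_of_nonpos hlog0]
  have hkey := neg_log_le _ ht0 ht1
  refine hkey.trans ?_
  have e1 : a ^ 2 / Real.cosh (π*x) ^ 2 / (1 - a ^ 2 / Real.cosh (π*x) ^ 2)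
      = a ^ 2 / (Real.cosh (π*x) ^ 2 - a ^ 2) := by
    rw [div_div]
    congr 1
    field_simp
  rw [e1]
  have hd2 : (1 - a^2) * Real.cosh (π*x) ^ 2 ≤ Real.cosh (π*x) ^ 2 - a ^ 2 := by
    nlinarith [mul_nonneg (sq_nonneg a)
      (by nlinarith [cosh_pi_one_le x] : (0:ℝ) ≤ Real.cosh (π*x) ^ 2 - 1)]
  calc a ^ 2 / (Real.cosh (π*x) ^ 2 - a ^ 2)
      ≤ a ^ 2 / ((1 - a^2) * Real.cosh (π*x) ^ 2) := by
        have hb : (0:ℝ) < (1 - a^2) * Real.cosh (π*x) ^ 2 :=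
          mul_pos (by linarith) hC2
        gcongr
  _ = a^2/(1-a^2) * (1 / Real.cosh (π*x) ^ 2) := by
      rw [div_mul_div_comm, mul_one]



lemma div_aux (K a : ℝ) (hK : 0 < K) (h2 : 0 < K - a^2) :
    -(2*a) / K / (1 - a ^ 2 / K) = -(2*a) / (K - a ^ 2) := by
  rw [div_div]
  congr 1
  field_simp

lemma hasDerivAt_F (b : ℝ) (h0 : 0 ≤ b) (h1 : b < 1) :
    HasDerivAt (fun a : ℝ => ∫ x : ℝ, Real.log (1 - a ^ 2 / Real.cosh (π * x) ^ 2))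
      (-(4/π) * Real.arcsin b / Real.sqrt (1 - b ^ 2)) b := by
  set r : ℝ := (1 + b) / 2 with hr
  have hrb : b < r := by rw [hr]; linarith
  have hr1 : r < 1 := by rw [hr]; linarith
  have hr0 : 0 < r := by rw [hr]; linarith
  set ε : ℝ := (1 - b) / 2 with hε
  have hε0 : 0 < ε := by rw [hε]; linarith
  have hball : ∀ a ∈ Metric.ball b ε, |a| < r := by
    intro a ha
    rw [Metric.mem_ball, Real.dist_eq] at ha
    rw [abs_lt] at ha ⊢
    constructor <;> [skip; skip] <;> rw [hr] <;> cases' abs_le.1 (le_refl |b - a|) with _ _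
    · nlinarith [ha.1, ha.2]
    · nlinarith [ha.1, ha.2]
  have key := hasDerivAt_integral_of_dominated_loc_of_deriv_le (μ := volume)
    (F := fun a x => Real.log (1 - a ^ 2 / Real.cosh (π * x) ^ 2))
    (F' := fun a x => -(2*a) / (Real.cosh (π * x) ^ 2 - a ^ 2))
    (x₀ := b)
    (bound := fun x => (2*r/(1-r^2)) * (1 / Real.cosh (π * x) ^ 2))
    (Metric.ball_mem_nhds b hε0) ?_ (f_integrable b (by nlinarith)) ?_ ?_ ?_ ?_
  · rcases key with ⟨-, hd⟩
    rwa [integral_inner b h0 h1] at hd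
  · -- measurability near b
    filter_upwards [Metric.ball_mem_nhds b hε0] with a ha
    have : a ^ 2 < 1 := by
      have := hball a ha
      nlinarith [abs_nonneg a, sq_abs a, this]
    exact (continuous_f a this).aestronglyMeasurable
  · -- measurability of F' b
    apply Continuous.aestronglyMeasurable
    exact continuous_const.div
      (by continuity) (fun x => (sub_sq_pos b (by nlinarith) x).ne')
  · -- bound
    filter_upwards with x a ha
    have har := hball a ha
    have ha2 : a ^ 2 < r ^ 2 := by nlinarith [sq_abs a, abs_nonneg a]
    have hr2 : r ^ 2 < 1 := by nlinarith
    have hCa := sub_sq_pos a (by linarith) x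
    have hC2 : (0:ℝ) < Real.cosh (π*x) ^ 2 := by positivity
    have hkey : (1 - r^2) * Real.cosh (π*x) ^ 2 ≤ Real.cosh (π*x) ^ 2 - a ^ 2 := by
      nlinarith [mul_nonneg (sq_nonneg r)
        (by nlinarith [cosh_pi_one_le x] : (0:ℝ) ≤ Real.cosh (π*x) ^ 2 - 1)]
    rw [Real.norm_eq_abs, abs_div, abs_of_pos hCa, abs_neg, abs_mul, abs_two]
    rw [div_le_iff₀ hCa]
    calc 2 * |a| ≤ 2 * r := by linarith [har]
    _ = (2*r/(1-r^2)) * (1 / Real.cosh (π*x) ^ 2) * ((1 - r^2) * Real.cosh (π*x) ^ 2) := by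
        have hD : (0:ℝ) < (1 - r^2) * Real.cosh (π*x) ^ 2 :=
          mul_pos (by nlinarith) hC2
        field_simp
        exact (div_self (by nlinarith)).symm
    _ ≤ _ := by
        apply mul_le_mul_of_nonneg_left hkey
        apply mul_nonneg (div_nonneg (by linarith) (by nlinarith)) (by positivity)
  · exact (integrable_sech_sq.const_mul _)
  · -- differentiability in a
    filter_upwards with x a ha
    have har := hball a ha
    have ha2 : a ^ 2 < 1 := by nlinarith [sq_abs a, abs_nonneg a]
    have hC2 : (0:ℝ) < Real.cosh (π*x) ^ 2 := by positivity
    have h1' : HasDerivAt (fun a : ℝ => 1 - a ^ 2 / Real.cosh (π * x) ^ 2)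
        (-(2*a) / Real.cosh (π * x) ^ 2) a := by
      have hp : HasDerivAt (fun a : ℝ => a ^ 2) (2*a) a := by
        simpa [mul_comm] using hasDerivAt_pow 2 a
      have := (hp.div_const (Real.cosh (π * x) ^ 2)).const_sub 1
      simpa [neg_div] using this
    have h2' := h1'.log (arg_pos a ha2 x).ne'
    have hCa := sub_sq_pos a ha2 x
    rw [← div_aux (Real.cosh (π*x) ^ 2) a hC2 hCa]
    exact h2'

lemma key_lt (a : ℝ) (h0 : 0 ≤ a) (h1 : a < 1) :
    ∫ x : ℝ, Real.log (1 - a ^ 2 / Real.cosh (π * x) ^ 2)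
      = -(2/π) * Real.arcsin a ^ 2 := by
  have hint : IntervalIntegrable
      (fun t : ℝ => -(4/π) * Real.arcsin t / Real.sqrt (1 - t ^ 2)) volume 0 a := by
    apply ContinuousOn.intervalIntegrable
    rw [uIcc_of_le h0]
    apply ContinuousOn.div
    · exact (continuous_const.mul Real.continuous_arcsin).continuousOn
    · exact (Real.continuous_sqrt.comp (continuous_const.sub (continuous_pow 2))).continuousOn
    · intro t ht
      rw [mem_Icc] at ht
      have : t ^ 2 < 1 := by nlinarith
      exact (Real.sqrt_pos.2 (by linarith)).ne'
  have hFd : ∀ t ∈ uIcc (0:ℝ) a,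
      HasDerivAt (fun a : ℝ => ∫ x : ℝ, Real.log (1 - a ^ 2 / Real.cosh (π * x) ^ 2))
        (-(4/π) * Real.arcsin t / Real.sqrt (1 - t ^ 2)) t := by
    intro t ht
    rw [uIcc_of_le h0, mem_Icc] at ht
    exact hasDerivAt_F t ht.1 (lt_of_le_of_lt ht.2 h1)
  have hRd : ∀ t ∈ uIcc (0:ℝ) a,
      HasDerivAt (fun t : ℝ => -(2/π) * Real.arcsin t ^ 2)
        (-(4/π) * Real.arcsin t / Real.sqrt (1 - t ^ 2)) t := by
    intro t ht
    rw [uIcc_of_le h0, mem_Icc] at ht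
    have ht1 : t < 1 := lt_of_le_of_lt ht.2 h1
    have harc := Real.hasDerivAt_arcsin (by linarith : t ≠ -1) (ht1.ne)
    have hd := (harc.pow 2).const_mul (-(2/π))
    refine hd.congr_deriv ?_
    symm
    have hs : Real.sqrt (1 - t ^ 2) > 0 := Real.sqrt_pos.2 (by nlinarith)
    push_cast
    norm_num
    field_simp
    ring
  have hFTC := intervalIntegral.integral_eq_sub_of_hasDerivAt hFd hint
  have hRTC := intervalIntegral.integral_eq_sub_of_hasDerivAt hRd hint
  have hF0 : (∫ x : ℝ, Real.log (1 - (0:ℝ) ^ 2 / Real.cosh (π * x) ^ 2)) = 0 := by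
    simp
  rw [hFTC] at hRTC
  simp only [Real.arcsin_zero] at hRTC
  rw [hF0] at hRTC
  linarith [hRTC]



noncomputable def bound (x : ℝ) : ℝ := -Real.log (1 - 1 / Real.cosh (π * x) ^ 2)

lemma bound_meas : Measurable bound := by
  apply Measurable.neg
  apply Real.measurable_log.comp
  exact (measurable_const.sub (measurable_const.div
    ((continuous_cosh_pi.pow 2).measurable)))

lemma bound_arg_pos {x : ℝ} (hx : x ≠ 0) : 0 < 1 - 1 / Real.cosh (π * x) ^ 2 := by
  have h1 : 1 < Real.cosh (π * x) := Real.one_lt_cosh.2 (by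
    simp [Real.pi_ne_zero, hx])
  have h2 : 1 < Real.cosh (π * x) ^ 2 := by nlinarith
  have h3 : (0:ℝ) < Real.cosh (π * x) ^ 2 := by linarith
  rw [sub_pos, div_lt_one h3]
  exact h2

lemma bound_nonneg (x : ℝ) : 0 ≤ bound x := by
  unfold bound
  rw [neg_nonneg]
  apply Real.log_nonpos
  · have h3 : (0:ℝ) < Real.cosh (π * x) ^ 2 := by positivity
    have : 1 ≤ Real.cosh (π * x) ^ 2 := by nlinarith [cosh_pi_one_le x]
    rw [sub_nonneg, div_le_one h3]
    exact this
  · have : 0 ≤ 1 / Real.cosh (π * x) ^ 2 := by positivity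
    linarith

lemma bound_eq_log_tanh {x : ℝ} : bound x = -(2 * Real.log (Real.tanh (π * x))) := by
  unfold bound
  have hC : (0:ℝ) < Real.cosh (π * x) := cosh_pi_pos x
  have hC2 : (0:ℝ) < Real.cosh (π * x) ^ 2 := by positivity
  have h1 : 1 - 1 / Real.cosh (π * x) ^ 2 = Real.tanh (π * x) ^ 2 := by
    rw [Real.tanh_eq_sinh_div_cosh, div_pow]
    have hS : Real.sinh (π * x) ^ 2 = Real.cosh (π * x) ^ 2 - 1 := by
      have := Real.cosh_sq_sub_sinh_sq (π * x)
      linarith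
    rw [hS]
    field_simp
  rw [h1, Real.log_pow]
  push_cast
  ring

lemma bound_int_Ioc : IntegrableOn bound (Ioc 0 1) := by
  set M : ℝ := 2 * Real.log (Real.cosh π / π) with hM
  have hg : IntegrableOn (fun x : ℝ => 4 * x ^ (-(1/2) : ℝ) + M) (Ioc 0 1) := by
    apply Integrable.add
    · have h0 : IntervalIntegrable (fun x : ℝ => x ^ (-(1/2) : ℝ)) volume 0 1 :=
        intervalIntegral.intervalIntegrable_rpow' (by norm_num)
      have h := h0.const_mul 4
      rwa [intervalIntegrable_iff_integrableOn_Ioc_of_le (by norm_num)] at h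
    · exact integrableOn_const (by simp [Real.volume_Ioc])
  apply hg.mono' (bound_meas.aestronglyMeasurable.restrict)
  filter_upwards [ae_restrict_mem measurableSet_Ioc] with x hx
  obtain ⟨hx0, hx1⟩ := hx
  have hπx : 0 < π * x := by positivity
  have hsinh : π * x < Real.sinh (π * x) := Real.self_lt_sinh_iff.2 hπx
  have hcosh : Real.cosh (π * x) ≤ Real.cosh π := by
    rw [Real.cosh_le_cosh]
    rw [abs_of_pos hπx, abs_of_pos Real.pi_pos]
    nlinarith [Real.pi_pos]
  have hC : (0:ℝ) < Real.cosh (π * x) := cosh_pi_pos x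
  have hCπ : (0:ℝ) < Real.cosh π := Real.cosh_pos π
  have htanh_lb : x * (π / Real.cosh π) ≤ Real.tanh (π * x) := by
    rw [Real.tanh_eq_sinh_div_cosh]
    have h1 : x * (π / Real.cosh π) = (π * x) / Real.cosh π := by ring
    rw [h1]
    apply div_le_div₀ (by positivity) hsinh.le hC hcosh
  have htanh_pos : 0 < x * (π / Real.cosh π) := by positivity
  have hlog1 : Real.log (x * (π / Real.cosh π)) ≤ Real.log (Real.tanh (π * x)) :=
    Real.log_le_log htanh_pos htanh_lb
  have hlogmul : Real.log (x * (π / Real.cosh π))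
      = Real.log x + Real.log (π / Real.cosh π) :=
    Real.log_mul hx0.ne' (by positivity)
  have hlogdiv : Real.log (π / Real.cosh π) = -Real.log (Real.cosh π / π) := by
    rw [← Real.log_inv]
    congr 1
    rw [inv_div]
  -- -2 log x ≤ 4 x^{-1/2}
  have hrpow : -Real.log x ≤ 2 * x ^ (-(1/2) : ℝ) := by
    have h1 : Real.log (x ^ (-(1/2) : ℝ)) = -(1/2) * Real.log x := Real.log_rpow hx0 _
    have h2 : Real.log (x ^ (-(1/2) : ℝ)) ≤ x ^ (-(1/2) : ℝ) - 1 :=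
      Real.log_le_sub_one_of_pos (by positivity)
    nlinarith [Real.rpow_nonneg hx0.le (-(1/2) : ℝ)]
  rw [Real.norm_eq_abs, abs_of_nonneg (bound_nonneg x), bound_eq_log_tanh]
  have hfinal : -(2 * Real.log (Real.tanh (π * x))) ≤ 4 * x ^ (-(1/2) : ℝ) + M := by
    have step1 : -(2 * Real.log (Real.tanh (π * x)))
        ≤ -(2 * (Real.log x + Real.log (π / Real.cosh π))) := by
      nlinarith [hlog1, hlogmul]
    refine step1.trans ?_
    rw [hlogdiv, hM]
    nlinarith [hrpow]
  exact hfinal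

lemma bound_int_Ioi : IntegrableOn bound (Ioi 1) := by
  have hg : IntegrableOn (fun x : ℝ => 8 * Real.exp (-(2*π) * x)) (Ioi 1) :=
    (exp_neg_integrableOn_Ioi 1 (by positivity)).const_mul 8
  apply hg.mono' (bound_meas.aestronglyMeasurable.restrict)
  filter_upwards [ae_restrict_mem measurableSet_Ioi] with x hx
  have hx1 : (1:ℝ) < x := hx
  have hπx : (1:ℝ) ≤ π * x := by nlinarith [Real.pi_gt_three]
  set E := Real.exp (2 * (π * x)) with hE
  have hE2 : (2:ℝ) ≤ E := by
    have h1 : (2:ℝ) ≤ Real.exp 1 := by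
      have := Real.add_one_le_exp 1
      linarith
    have h2 : Real.exp 1 ≤ E := Real.exp_le_exp.2 (by nlinarith)
    linarith
  have hv0 : (0:ℝ) ≤ 2 / (E + 1) := by positivity
  have hv1 : 2 / (E + 1) < 1 := by
    rw [div_lt_one (by linarith)]
    linarith
  have hlog : -Real.log (Real.tanh (π * x)) ≤ (2/(E+1)) / (1 - 2/(E+1)) := by
    rw [tanh_eq (π * x), ← hE]
    exact neg_log_le _ hv0 hv1
  have hsimp : (2/(E+1)) / (1 - 2/(E+1)) = 2 / (E - 1) := by
    have h1 : E + 1 ≠ 0 := by linarith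
    have h2 : E - 1 ≠ 0 := by linarith
    field_simp
    rw [show E + 1 - 2 = E - 1 from by ring, 
      div_self h2]
  have hle : 2 / (E - 1) ≤ 4 / E := by
    rw [div_le_div_iff₀ (by linarith) (by linarith)]
    linarith
  have hexp : 4 / E = 4 * Real.exp (-(2*π) * x) := by
    rw [hE, show (-(2*π)*x) = -(2*(π*x)) from by ring, Real.exp_neg, div_eq_mul_inv]
  rw [Real.norm_eq_abs, abs_of_nonneg (bound_nonneg x), bound_eq_log_tanh]
  have : -(2 * Real.log (Real.tanh (π * x))) ≤ 8 * Real.exp (-(2*π) * x) := by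
    have h1 : -(2 * Real.log (Real.tanh (π * x))) ≤ 2 * (2/(E-1)) := by
      nlinarith [hlog, hsimp.le, hsimp.ge]
    refine h1.trans ?_
    have := hle
    nlinarith [hexp.le, hexp.ge, hle]
  exact this

lemma bound_integrable : Integrable bound := by
  apply integrable_of_even
  · intro x
    unfold bound
    rw [mul_neg, Real.cosh_neg]
  · have := (bound_int_Ioc.union bound_int_Ioi)
    rwa [Ioc_union_Ioi_eq_Ioi (by norm_num : (0:ℝ) ≤ 1)] at this




lemma ae_ne_zero : ∀ᵐ x : ℝ, x ≠ 0 := by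
  have h : (volume : Measure ℝ) {0} = 0 := measure_singleton 0
  rw [ae_iff]
  convert h using 2
  ext x
  simp

lemma key_one :
    ∫ x : ℝ, Real.log (1 - (1:ℝ) ^ 2 / Real.cosh (π * x) ^ 2)
      = -(2/π) * Real.arcsin 1 ^ 2 := by
  set s : ℕ → ℝ := fun n => 1 - 1 / (n + 1) with hs
  have hs0 : ∀ n, 0 ≤ s n := by
    intro n
    have : 1 / ((n:ℝ) + 1) ≤ 1 := by
      rw [div_le_one (by positivity)]
      simp
    simp only [hs]
    linarith
  have hs1 : ∀ n, s n < 1 := by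
    intro n
    have : 0 < 1 / ((n:ℝ) + 1) := by positivity
    simp only [hs]
    linarith
  have hs2 : ∀ n, (s n) ^ 2 < 1 := by
    intro n
    nlinarith [hs0 n, hs1 n]
  have hstend : Tendsto s atTop (𝓝 1) := by
    have h2 : Tendsto (fun n : ℕ => 1 - 1/((n:ℝ)+1)) atTop (𝓝 (1 - 0)) :=
      tendsto_const_nhds.sub tendsto_one_div_add_atTop_nhds_zero_nat
    rw [sub_zero] at h2
    exact h2
  have hDCT := tendsto_integral_filter_of_dominated_convergence (μ := volume) (l := (atTop : Filter ℕ))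
    (F := fun n x => Real.log (1 - (s n) ^ 2 / Real.cosh (π * x) ^ 2))
    (f := fun x => Real.log (1 - (1:ℝ) ^ 2 / Real.cosh (π * x) ^ 2))
    (bound := bound) ?_ ?_ bound_integrable ?_
  · -- combine with key_lt
    have heq : (fun n => ∫ x : ℝ, Real.log (1 - (s n) ^ 2 / Real.cosh (π * x) ^ 2))
        = fun n => -(2/π) * Real.arcsin (s n) ^ 2 := by
      funext n
      exact key_lt (s n) (hs0 n) (hs1 n)
    rw [heq] at hDCT
    have htend2 : Tendsto (fun n => -(2/π) * Real.arcsin (s n) ^ 2) atTop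
        (𝓝 (-(2/π) * Real.arcsin 1 ^ 2)) := by
      apply Tendsto.const_mul
      exact (((Real.continuous_arcsin.tendsto 1).comp hstend).pow 2)
    exact tendsto_nhds_unique hDCT htend2
  · -- measurability
    filter_upwards with n
    exact (continuous_f (s n) (hs2 n)).aestronglyMeasurable
  · -- bound
    filter_upwards with n
    filter_upwards [ae_ne_zero] with x hx
    have hC2 : (0:ℝ) < Real.cosh (π * x) ^ 2 := by positivity
    have hpos := bound_arg_pos hx
    have hsn2 : (s n) ^ 2 ≤ 1 := by nlinarith [hs0 n, hs1 n]
    have h1 : (s n) ^ 2 / Real.cosh (π * x) ^ 2 ≤ 1 / Real.cosh (π * x) ^ 2 := by gcongr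
    have hnn : 0 ≤ (s n) ^ 2 / Real.cosh (π * x) ^ 2 :=
      div_nonneg (sq_nonneg _) hC2.le
    have harg_le : 1 - (s n) ^ 2 / Real.cosh (π * x) ^ 2 ≤ 1 := by linarith
    have harg_pos : 0 < 1 - (s n) ^ 2 / Real.cosh (π * x) ^ 2 := by linarith
    rw [Real.norm_eq_abs, abs_of_nonpos (Real.log_nonpos (by linarith) harg_le)]
    show _ ≤ -Real.log (1 - 1 / Real.cosh (π * x) ^ 2)
    exact neg_le_neg (Real.log_le_log hpos (by linarith))
  · -- limit
    filter_upwards [ae_ne_zero] with x hx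
    have hpos := bound_arg_pos hx
    have hC2 : (0:ℝ) < Real.cosh (π * x) ^ 2 := by positivity
    have hcont : ContinuousAt (fun b : ℝ => Real.log (1 - b ^ 2 / Real.cosh (π * x) ^ 2)) 1 := by
      apply ContinuousAt.log
      · fun_prop
      · rw [one_pow]
        exact hpos.ne'
    exact (hcont.tendsto.comp hstend)


end Stmt14

/-- The integral computation in the Remark after Corollary 2 of Frank–Pushnitski,
*The spectral density of a product of spectral projections*:  for `0 ≤ a ≤ 1`,
`(2π)⁻¹ ∫_ℝ ln(1 - a²/cosh²(πx)) dx = -π⁻² arcsin²(a)`. -/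
theorem statement14 (a : ℝ) (ha0 : 0 ≤ a) (ha1 : a ≤ 1) :
    (1 / (2 * π)) * ∫ x : ℝ, Real.log (1 - a ^ 2 / Real.cosh (π * x) ^ 2) =
      -(1 / π ^ 2) * Real.arcsin a ^ 2 := by
  have hπ := Real.pi_ne_zero
  rcases eq_or_lt_of_le ha1 with h1 | h1
  · subst h1
    rw [Stmt14.key_one]
    field_simp
  · rw [Stmt14.key_lt a ha0 h1]
    field_simp
end

section
/- Under Assumptions 1 and 2, for every 0 < ε ≤ δ the factorization 1_{(ε,δ)}(H) 1_{(-δ,-ε)}(H₀) = 𝒵_ε (𝒵_ε^{(0)})* holds. -/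
/- Preliminaries: trace and Schatten classes of operators on a complex Hilbert space. -/

open MeasureTheory Filter Topology Set ENNReal ContinuousLinearMap Complex

noncomputable section

namespace SpectralDensity

variable (E : Type*) [NormedAddCommGroup E] [InnerProductSpace ℂ E] [CompleteSpace E]

/-- The index set of a fixed Hilbert basis of `E`. -/
def hbIndex : Set E := (exists_hilbertBasis ℂ E).choose

/-- A fixed Hilbert basis of `E`. -/
def hb : HilbertBasis (hbIndex E) ℂ E := (exists_hilbertBasis ℂ E).choose_spec.choose

variable {E}

/-- The trace, with values in `ℝ≥0∞`; for a non-negative operator this is its trace. -/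
def traceENN (T : E →L[ℂ] E) : ℝ≥0∞ :=
  ∑' i : hbIndex E, (‖inner (𝕜 := ℂ) (hb E i) (T (hb E i))‖₊ : ℝ≥0∞)

/-- The real trace; for a self-adjoint trace class operator this is its trace. -/
def traceR (T : E →L[ℂ] E) : ℝ :=
  ∑' i : hbIndex E, Complex.re (inner (𝕜 := ℂ) (hb E i) (T (hb E i)))

variable {F : Type*} [NormedAddCommGroup F] [InnerProductSpace ℂ F] [CompleteSpace F]

/-- `‖T‖_p ^ p`, the `p`-th power of the Schatten `p`-norm of `T`, defined as the trace of
`(T^* T)^{p/2} = |T|^p` (computed by the continuous functional calculus). -/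
def snormPow (p : ℝ) (T : E →L[ℂ] F) : ℝ≥0∞ :=
  traceENN (cfc (fun x : ℝ => x ^ (p / 2)) (ContinuousLinearMap.adjoint T ∘L T))

/-- Membership in the Schatten class `𝐒_p`. -/
def MemSchatten (p : ℝ) (T : E →L[ℂ] F) : Prop := snormPow p T ≠ ∞

end SpectralDensity

/- Preliminaries: an abstract self-adjoint operator, encoded through its bounded Borel
functional calculus, and the objects `F₀(λ)`, `F(λ)`, `Π_ε^{(1)}(λ)`, `Π_ε^{(2)}(λ)`
of Frank–Pushnitski, "The spectral density of a product of spectral projections". -/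

namespace SpectralDensity

/-- A function `ℝ → ℂ` that is Borel measurable and bounded. -/
def Good (f : ℝ → ℂ) : Prop := Measurable f ∧ ∃ C, ∀ x, ‖f x‖ ≤ C

/-- The bounded Borel functional calculus of a self-adjoint operator on `E`: an abstract
substitute for a (possibly unbounded) self-adjoint operator, given by the map `f ↦ f(H)` on
bounded Borel functions.  It is a unital `⋆`-homomorphism, contractive, and continuous in the
strong operator topology under bounded pointwise convergence; these properties characterise
the Borel functional calculi of self-adjoint operators. -/
structure BorelCalculus (E : Type*) [NormedAddCommGroup E] [InnerProductSpace ℂ E]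
    [CompleteSpace E] where
  Φ : (ℝ → ℂ) → E →L[ℂ] E
  map_one : Φ (fun _ => 1) = 1
  map_add : ∀ f g, Good f → Good g → Φ (f + g) = Φ f + Φ g
  map_smul : ∀ (c : ℂ) f, Good f → Φ (c • f) = c • Φ f
  map_mul : ∀ f g, Good f → Good g → Φ (f * g) = Φ f ∘L Φ g
  map_star : ∀ f, Good f →
    Φ (fun x => starRingEnd ℂ (f x)) = ContinuousLinearMap.adjoint (Φ f)
  norm_le : ∀ f (C : ℝ), Measurable f → (∀ x, ‖f x‖ ≤ C) → ‖Φ f‖ ≤ C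
  tendsto_of_bounded : ∀ (f : ℕ → ℝ → ℂ) (g : ℝ → ℂ) (C : ℝ),
    (∀ n, Measurable (f n)) → Measurable g → (∀ n x, ‖f n x‖ ≤ C) →
    (∀ x, Tendsto (fun n => f n x) atTop (𝓝 (g x))) →
    ∀ v : E, Tendsto (fun n => Φ (f n) v) atTop (𝓝 (Φ g v))

variable {ℋ 𝒦 : Type*} [NormedAddCommGroup ℋ] [InnerProductSpace ℂ ℋ] [CompleteSpace ℋ]
  [NormedAddCommGroup 𝒦] [InnerProductSpace ℂ 𝒦] [CompleteSpace 𝒦]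

/-- The function `x ↦ (x - i)⁻¹`, whose image under the functional calculus of `H` is the
resolvent `(H - i)⁻¹`. -/
def resolventFun : ℝ → ℂ := fun x => ((x : ℂ) - Complex.I)⁻¹

/-- `H = H₀ + V` for a bounded perturbation `V`, expressed through the second resolvent
identity `(H-i)⁻¹ - (H₀-i)⁻¹ = -(H-i)⁻¹ V (H₀-i)⁻¹`; here the self-adjoint operators `H`,
`H₀` are encoded by their Borel functional calculi `C`, `C0`. -/
def IsPerturbationOf (C C0 : BorelCalculus ℋ) (V : ℋ →L[ℂ] ℋ) : Prop :=
  C.Φ resolventFun - C0.Φ resolventFun =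
    - (C.Φ resolventFun ∘L V ∘L C0.Φ resolventFun)

/-- The function `x ↦ (x + M)^{-1/2-m}`, cut off (irrelevantly, on the complement of the
spectrum) below the lower bound `c` of the spectrum; its image under the functional calculus
of `H₀` is `(H₀ + M)^{-1/2-m}`. -/
def resPowFun (c M m : ℝ) : ℝ → ℂ :=
  fun x => if c ≤ x then (((x + M) ^ (-(1/2 + m)) : ℝ) : ℂ) else 0

/-- The indicator function `1_{(-∞,λ)}`. -/
def iioFun (lam : ℝ) : ℝ → ℂ := Set.indicator (Set.Iio lam) 1

/-- The indicator function `1_{(λ,∞)}`. -/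
def ioiFun (lam : ℝ) : ℝ → ℂ := Set.indicator (Set.Ioi lam) 1

/-- The indicator function `1_{(λ,μ)}`. -/
def iooFun (lam mu : ℝ) : ℝ → ℂ := Set.indicator (Set.Ioo lam mu) 1

/-- `F₀(λ) = G 1_{(-∞,λ)}(H₀) G^*`. -/
def F₀ (C0 : BorelCalculus ℋ) (G : ℋ →L[ℂ] 𝒦) (lam : ℝ) : 𝒦 →L[ℂ] 𝒦 :=
  G ∘L C0.Φ (iioFun lam) ∘L ContinuousLinearMap.adjoint G

/-- `F(λ) = V₀ G 1_{(-∞,λ)}(H) G^* V₀`. -/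
def Fop (C : BorelCalculus ℋ) (G : ℋ →L[ℂ] 𝒦) (V₀ : 𝒦 →L[ℂ] 𝒦) (lam : ℝ) : 𝒦 →L[ℂ] 𝒦 :=
  V₀ ∘L G ∘L C.Φ (iioFun lam) ∘L ContinuousLinearMap.adjoint G ∘L V₀

/-- `Π_ε^{(1)}(λ) = 1_{(-∞,λ-ε)}(H₀) 1_{(λ+ε,∞)}(H) 1_{(-∞,λ-ε)}(H₀)`. -/
def Pi1 (C0 C : BorelCalculus ℋ) (lam ε : ℝ) : ℋ →L[ℂ] ℋ :=
  C0.Φ (iioFun (lam - ε)) ∘L C.Φ (ioiFun (lam + ε)) ∘L C0.Φ (iioFun (lam - ε))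

/-- `Π_ε^{(2)}(λ) = ψ⁻(H₀-λ) ψ⁺(H-λ) ψ⁻(H₀-λ)` for cut-off functions `ψ⁻ = psim`,
`ψ⁺ = psip`. -/
def Pi2 (C0 C : BorelCalculus ℋ) (psim psip : ℝ → ℝ) (lam : ℝ) : ℋ →L[ℂ] ℋ :=
  C0.Φ (fun x => (psim (x - lam) : ℂ)) ∘L C.Φ (fun x => (psip (x - lam) : ℂ)) ∘L
    C0.Φ (fun x => (psim (x - lam) : ℂ))

/-- `ψ⁺ = psip` is an admissible regularisation at scale `ε` of the indicator of `(0,∞)`. -/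
def IsPsiPlus (ε : ℝ) (psip : ℝ → ℝ) : Prop :=
  Continuous psip ∧ (∀ x, 0 ≤ psip x ∧ psip x ≤ 1) ∧
    (∀ x ≤ ε, psip x = 0) ∧ (∀ x, 2 * ε ≤ x → psip x = 1)

/-- `ψ⁻ = psim` is an admissible regularisation at scale `ε` of the indicator of `(-∞,0)`. -/
def IsPsiMinus (ε : ℝ) (psim : ℝ → ℝ) : Prop :=
  Continuous psim ∧ (∀ x, 0 ≤ psim x ∧ psim x ≤ 1) ∧
    (∀ x, x ≤ -(2 * ε) → psim x = 1) ∧ (∀ x, -ε ≤ x → psim x = 0)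

end SpectralDensity

namespace SpectralDensity

variable {ℋ 𝒦 : Type*} [NormedAddCommGroup ℋ] [InnerProductSpace ℂ ℋ] [CompleteSpace ℋ]
  [NormedAddCommGroup 𝒦] [InnerProductSpace ℂ 𝒦] [CompleteSpace 𝒦]

/-- `F' lam` is the derivative of `λ ↦ F λ` at `lam`, in the `𝐒_p` norm. -/
def HasSchattenDerivAt (p : ℝ) (F : ℝ → 𝒦 →L[ℂ] 𝒦) (F' : 𝒦 →L[ℂ] 𝒦) (lam : ℝ) : Prop :=
  Filter.Tendsto (fun h : ℝ => snormPow p (h⁻¹ • (F (lam + h) - F lam) - F'))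
    (nhdsWithin 0 {0}ᶜ) (nhds 0)

/-- `λ ↦ F' λ` is Hölder continuous on `[-δ,δ]` in the `𝐒_p` norm, with exponent `κ` and
constant `CH` (stated for the `p`-th powers of the `𝐒_p` norms). -/
def SchattenHolderOn (p : ℝ) (F' : ℝ → 𝒦 →L[ℂ] 𝒦) (δ κ CH : ℝ) : Prop :=
  ∀ lam ∈ Set.Icc (-δ) δ, ∀ mu ∈ Set.Icc (-δ) δ,
    snormPow p (F' lam - F' mu) ≤ ENNReal.ofReal ((CH * |lam - mu| ^ κ) ^ p)

/-- The non-negative operator `A = π² F'(0)^{1/2} F₀'(0) F'(0)^{1/2}` on `𝒦`; its non-zero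
eigenvalues are the numbers `a_ℓ² = sin²(θ_ℓ/2)` associated with the eigenvalues
`e^{iθ_ℓ}` of the scattering matrix. -/
def Aop (F₀'0 F'0 : 𝒦 →L[ℂ] 𝒦) : 𝒦 →L[ℂ] 𝒦 :=
  (Real.pi ^ 2 : ℝ) • (CFC.sqrt F'0 ∘L F₀'0 ∘L CFC.sqrt F'0)

/-- The sequence `(a ℓ)_{ℓ ∈ ℕ}` enumerates (by the squares `a ℓ ^ 2`, over those `ℓ` with
`a ℓ ≠ 0`, and counting multiplicities) the non-zero eigenvalues of `A`:  there is a family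
`e` of vectors, orthonormal on `{ℓ | a ℓ ≠ 0}`, with `A (e ℓ) = a ℓ ^ 2 • e ℓ` there, and
`A = 0` on the orthogonal complement of this family. -/
def EnumeratesSqEigenvalues (A : 𝒦 →L[ℂ] 𝒦) (a : ℕ → ℝ) : Prop :=
  (∀ ℓ, 0 ≤ a ℓ) ∧ ∃ e : ℕ → 𝒦,
    Orthonormal ℂ (fun ℓ : {ℓ : ℕ // a ℓ ≠ 0} => e (ℓ : ℕ)) ∧
    (∀ ℓ, a ℓ ≠ 0 → A (e ℓ) = (((a ℓ) ^ 2 : ℝ) : ℂ) • e ℓ) ∧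
    (∀ v : 𝒦, (∀ ℓ, a ℓ ≠ 0 → inner (𝕜 := ℂ) (e ℓ) v = 0) → A v = 0)

end SpectralDensity

namespace SpectralDensity

open MeasureTheory

variable {ℋ 𝒦 : Type*} [NormedAddCommGroup ℋ] [InnerProductSpace ℂ ℋ] [CompleteSpace ℋ]
  [NormedAddCommGroup 𝒦] [InnerProductSpace ℂ 𝒦] [CompleteSpace 𝒦]

/-- The defining formula of the operator `𝒵_ε : L²(ℝ₊,𝒦) → ℋ`,
`𝒵_ε f = ∫₀^∞ e^{-tH} 1_{(ε,δ)}(H) G^* V₀ f(t) dt`. -/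
def Zfun (C : BorelCalculus ℋ) (G : ℋ →L[ℂ] 𝒦) (V₀ : 𝒦 →L[ℂ] 𝒦) (ε δ : ℝ)
    (f : Lp 𝒦 2 (volume.restrict (Set.Ioi (0:ℝ)))) : ℋ :=
  ∫ t in Set.Ioi (0:ℝ),
    (C.Φ (fun x => Complex.exp (-(t * x)) * iooFun ε δ x))
      ((ContinuousLinearMap.adjoint G) (V₀ (f t)))

/-- The defining formula of the operator `𝒵_ε^{(0)} : L²(ℝ₊,𝒦) → ℋ`,
`𝒵_ε^{(0)} f = ∫₀^∞ e^{tH₀} 1_{(-δ,-ε)}(H₀) G^* f(t) dt`. -/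
def Z0fun (C0 : BorelCalculus ℋ) (G : ℋ →L[ℂ] 𝒦) (ε δ : ℝ)
    (f : Lp 𝒦 2 (volume.restrict (Set.Ioi (0:ℝ)))) : ℋ :=
  ∫ t in Set.Ioi (0:ℝ),
    (C0.Φ (fun x => Complex.exp (t * x) * iooFun (-δ) (-ε) x))
      ((ContinuousLinearMap.adjoint G) (f t))

/-- The kernel function `γ_ε(t) = ∫_ε^δ e^{-tλ} dλ`. -/
def gammaKer (ε δ t : ℝ) : ℝ := ∫ lam in ε..δ, Real.exp (-(t * lam))

end SpectralDensity

namespace SpectralDensity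


section Aux
set_option synthInstance.maxHeartbeats 1000000
set_option maxHeartbeats 1000000

variable {ℋ 𝒦 : Type*} [NormedAddCommGroup ℋ] [InnerProductSpace ℂ ℋ] [CompleteSpace ℋ]
  [NormedAddCommGroup 𝒦] [InnerProductSpace ℂ 𝒦] [CompleteSpace 𝒦]

/-! ### Good functions -/

lemma Good.smul' {f : ℝ → ℂ} (c : ℂ) (hf : Good f) : Good (c • f) := by
  obtain ⟨hm, C, hC⟩ := hf
  exact ⟨hm.const_smul c, ‖c‖ * C, fun x => by
    simp only [Pi.smul_apply, norm_smul]
    exact mul_le_mul_of_nonneg_left (hC x) (norm_nonneg c)⟩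

lemma Good.add' {f g : ℝ → ℂ} (hf : Good f) (hg : Good g) : Good (f + g) := by
  obtain ⟨hm, C, hC⟩ := hf; obtain ⟨hm', C', hC'⟩ := hg
  exact ⟨hm.add hm', C + C', fun x => le_trans (norm_add_le _ _) (add_le_add (hC x) (hC' x))⟩

lemma Good.sub' {f g : ℝ → ℂ} (hf : Good f) (hg : Good g) : Good (f - g) := by
  have : f - g = f + (-1 : ℂ) • g := by funext x; simp [sub_eq_add_neg]
  rw [this]; exact hf.add' (hg.smul' (-1))

lemma Good.mul' {f g : ℝ → ℂ} (hf : Good f) (hg : Good g) : Good (f * g) := by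
  obtain ⟨hm, C, hC⟩ := hf; obtain ⟨hm', C', hC'⟩ := hg
  refine ⟨hm.mul hm', C * C', fun x => ?_⟩
  rw [Pi.mul_apply, norm_mul]
  have h0 : (0:ℝ) ≤ C := le_trans (norm_nonneg _) (hC 0)
  exact mul_le_mul (hC x) (hC' x) (norm_nonneg _) h0

lemma complex_sub_I_ne (x : ℝ) : ((x:ℂ) - Complex.I) ≠ 0 := fun h => by
  have := congrArg Complex.im h; simp at this

lemma good_resolventFun : Good resolventFun := by
  refine ⟨(Complex.measurable_ofReal.sub measurable_const).inv, 1, fun x => ?_⟩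
  rw [resolventFun, norm_inv, inv_le_one_iff₀]
  right
  calc (1:ℝ) = |((x:ℂ) - Complex.I).im| := by simp
    _ ≤ ‖(x:ℂ) - Complex.I‖ := Complex.abs_im_le_norm _
    _ = ‖(x:ℂ) - Complex.I‖ := rfl

/-! ### The functions `efun` and `mfun` -/

/-- the function `x ↦ e^{-tx} 1_{(a,b)}(x)`. -/
def efun (t a b : ℝ) : ℝ → ℂ := fun x => Complex.exp (-(t * x)) * iooFun a b x

/-- the function `x ↦ x e^{-tx} 1_{(a,b)}(x)`. -/
def mfun (t a b : ℝ) : ℝ → ℂ := fun x => (x : ℂ) * efun t a b x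

lemma measurable_iooFun (a b : ℝ) : Measurable (iooFun a b) :=
  (measurable_const.indicator measurableSet_Ioo)

lemma measurable_efun (t a b : ℝ) : Measurable (efun t a b) :=
  ((Complex.measurable_exp.comp
    ((measurable_const.mul Complex.measurable_ofReal).neg)).mul (measurable_iooFun a b))

lemma measurable_mfun (t a b : ℝ) : Measurable (mfun t a b) :=
  Complex.measurable_ofReal.mul (measurable_efun t a b)

lemma efun_eq_zero {t a b x : ℝ} (h : x ∉ Set.Ioo a b) : efun t a b x = 0 := by
  unfold efun
  rw [show iooFun a b x = 0 by simp [iooFun, h], mul_zero]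

lemma efun_eq_exp {t a b x : ℝ} (h : x ∈ Set.Ioo a b) :
    efun t a b x = Complex.exp (-(t * x) : ℝ) := by
  unfold efun
  rw [show iooFun a b x = 1 by simp [iooFun, h], mul_one]
  push_cast; ring_nf

lemma abs_le_max_of_mem_Ioo {a b x : ℝ} (h : x ∈ Set.Ioo a b) : |x| ≤ max |a| |b| := by
  rw [abs_le]
  refine ⟨le_trans (le_trans (neg_le_neg (le_max_left |a| |b|)) (neg_abs_le a)) h.1.le,
    le_trans h.2.le (le_trans (le_abs_self b) (le_max_right _ _))⟩

lemma neg_mul_le_of_mem_Ioo {a b x : ℝ} (t : ℝ) (h : x ∈ Set.Ioo a b) :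
    -(t * x) ≤ max (-(t * a)) (-(t * b)) := by
  rcases le_total t 0 with ht | ht
  · exact le_max_of_le_right (by nlinarith [h.1, h.2])
  · exact le_max_of_le_left (by nlinarith [h.1, h.2])

lemma norm_efun_le (t a b : ℝ) (x : ℝ) :
    ‖efun t a b x‖ ≤ Real.exp (max (-(t * a)) (-(t * b))) := by
  by_cases h : x ∈ Set.Ioo a b
  · rw [efun_eq_exp h, ← Complex.ofReal_exp, Complex.norm_real, Real.norm_eq_abs,
      abs_of_pos (Real.exp_pos _)]
    exact Real.exp_le_exp.2 (neg_mul_le_of_mem_Ioo t h)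
  · rw [efun_eq_zero h]; simp [(Real.exp_pos _).le]

lemma good_efun (t a b : ℝ) : Good (efun t a b) :=
  ⟨measurable_efun t a b, _, norm_efun_le t a b⟩

lemma norm_mfun_le (t a b : ℝ) (x : ℝ) :
    ‖mfun t a b x‖ ≤ (max |a| |b|) * Real.exp (max (-(t * a)) (-(t * b))) := by
  unfold mfun
  by_cases h : x ∈ Set.Ioo a b
  · rw [norm_mul, Complex.norm_real, Real.norm_eq_abs]
    exact mul_le_mul (abs_le_max_of_mem_Ioo h) (norm_efun_le t a b x) (norm_nonneg _)
      (le_max_iff.2 (Or.inl (abs_nonneg a)))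
  · rw [efun_eq_zero h, mul_zero]
    simp only [norm_zero]
    positivity

lemma good_mfun (t a b : ℝ) : Good (mfun t a b) :=
  ⟨measurable_mfun t a b, _, norm_mfun_le t a b⟩

/-! ### Algebraic lemmas for `Φ` -/

lemma Phi_sub (C : BorelCalculus ℋ) {f g : ℝ → ℂ} (hf : Good f) (hg : Good g) :
    C.Φ (f - g) = C.Φ f - C.Φ g := by
  have h1 : f - g = f + (-1 : ℂ) • g := by funext x; simp [sub_eq_add_neg]
  rw [h1, C.map_add _ _ hf (hg.smul' (-1)), C.map_smul _ _ hg]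
  simp [sub_eq_add_neg]

lemma norm_Phi_le (C : BorelCalculus ℋ) {f : ℝ → ℂ} {Cb : ℝ} (hm : Measurable f)
    (hb : ∀ x, ‖f x‖ ≤ Cb) : ‖C.Φ f‖ ≤ Cb := C.norm_le f Cb hm hb

lemma norm_Phi_efun_le (C : BorelCalculus ℋ) (t a b : ℝ) :
    ‖C.Φ (efun t a b)‖ ≤ Real.exp (max (-(t * a)) (-(t * b))) :=
  C.norm_le _ _ (measurable_efun t a b) (norm_efun_le t a b)

lemma conj_efun (t a b : ℝ) :
    (fun x => starRingEnd ℂ (efun t a b x)) = efun t a b := by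
  funext x
  by_cases h : x ∈ Set.Ioo a b
  · rw [efun_eq_exp h, ← Complex.ofReal_exp, Complex.conj_ofReal]
  · rw [efun_eq_zero h, map_zero]

lemma Phi_efun_selfAdjoint (C : BorelCalculus ℋ) (t a b : ℝ) :
    ContinuousLinearMap.adjoint (C.Φ (efun t a b)) = C.Φ (efun t a b) := by
  rw [← C.map_star _ (good_efun t a b), conj_efun]

/-! ### The derivative of `t ↦ Φ (efun t a b)` -/

lemma efun_diff_bound (a b t : ℝ) {h : ℝ} (hh : |h| * max |a| |b| ≤ 1) (x : ℝ) :
    ‖efun (t + h) a b x - efun t a b x + (h : ℂ) * mfun t a b x‖ ≤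
      (max |a| |b|) ^ 2 * Real.exp (max (-(t * a)) (-(t * b))) * h ^ 2 := by
  by_cases hx : x ∈ Set.Ioo a b
  · have key : efun (t + h) a b x - efun t a b x + (h : ℂ) * mfun t a b x =
        (Complex.exp (-(h * x) : ℝ) - 1 - (-(h * x) : ℝ)) * Complex.exp (-(t * x) : ℝ) := by
      rw [efun_eq_exp hx, efun_eq_exp hx, mfun, efun_eq_exp hx]
      rw [show ((-((t + h) * x) : ℝ) : ℂ) = ((-(h * x) : ℝ) : ℂ) + ((-(t * x) : ℝ) : ℂ) by
        push_cast; ring]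
      rw [Complex.exp_add]
      push_cast; ring
    rw [key, norm_mul]
    have h1 : ‖Complex.exp (-(h * x) : ℝ) - 1 - ((-(h * x) : ℝ) : ℂ)‖ ≤ (h * x) ^ 2 := by
      have habs : ‖((-(h * x) : ℝ) : ℂ)‖ ≤ 1 := by
        rw [Complex.norm_real, Real.norm_eq_abs, abs_neg, abs_mul]
        exact le_trans (mul_le_mul_of_nonneg_left (abs_le_max_of_mem_Ioo hx) (abs_nonneg h)) hh
      have := Complex.norm_exp_sub_one_sub_id_le habs
      rw [Complex.norm_real, Real.norm_eq_abs, abs_neg, abs_mul] at this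
      calc ‖Complex.exp (-(h * x) : ℝ) - 1 - ((-(h * x) : ℝ) : ℂ)‖
          ≤ (|h| * |x|) ^ 2 := this
        _ = (h * x)^2 := by rw [← abs_mul, _root_.sq_abs]
    have h2 : ‖Complex.exp ((-(t * x) : ℝ) : ℂ)‖ ≤ Real.exp (max (-(t * a)) (-(t * b))) := by
      rw [← Complex.ofReal_exp, Complex.norm_real, Real.norm_eq_abs,
        abs_of_pos (Real.exp_pos _)]
      exact Real.exp_le_exp.2 (neg_mul_le_of_mem_Ioo t hx)
    calc ‖Complex.exp (-(h * x) : ℝ) - 1 - ((-(h * x) : ℝ) : ℂ)‖ * ‖Complex.exp ((-(t * x) : ℝ) : ℂ)‖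
        ≤ (h * x) ^ 2 * Real.exp (max (-(t * a)) (-(t * b))) :=
          mul_le_mul h1 h2 (norm_nonneg _) (by positivity)
      _ ≤ ((max |a| |b|) ^ 2 * h ^ 2) * Real.exp (max (-(t * a)) (-(t * b))) := by
          apply mul_le_mul_of_nonneg_right _ (Real.exp_pos _).le
          have : |x| ≤ max |a| |b| := abs_le_max_of_mem_Ioo hx
          have h3 : (h * x) ^ 2 = h ^ 2 * |x| ^ 2 := by rw [mul_pow, _root_.sq_abs]
          rw [h3]
          have h4 : |x| ^ 2 ≤ (max |a| |b|) ^ 2 := by nlinarith [abs_nonneg x]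
          nlinarith [sq_nonneg h, h4]
      _ = (max |a| |b|) ^ 2 * Real.exp (max (-(t * a)) (-(t * b))) * h ^ 2 := by ring
  · rw [efun_eq_zero hx, efun_eq_zero hx, mfun, efun_eq_zero hx]
    simp only [sub_zero, mul_zero, add_zero, norm_zero, zero_sub, neg_zero, zero_add,
      sub_self]
    positivity

lemma real_smul_clm (r : ℝ) (T : ℋ →L[ℂ] ℋ) : ((r : ℂ) • T) = r • T := by
  ext v
  rw [ContinuousLinearMap.smul_apply, ContinuousLinearMap.smul_apply, Complex.coe_smul]

lemma hasDerivAt_Phi (C : BorelCalculus ℋ) (a b t : ℝ) :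
    HasDerivAt (fun s => C.Φ (efun s a b)) (-(C.Φ (mfun t a b))) t := by
  set m := max |a| |b| with hm
  have hm0 : 0 ≤ m := le_max_iff.2 (Or.inl (abs_nonneg a))
  set E := Real.exp (max (-(t * a)) (-(t * b))) with hE
  have hE0 : 0 < E := Real.exp_pos _
  rw [hasDerivAt_iff_isLittleO]
  have key : ∀ s : ℝ, C.Φ (efun s a b) - C.Φ (efun t a b) - (s - t) • (-(C.Φ (mfun t a b))) =
      C.Φ (efun s a b - efun t a b + ((s - t : ℝ) : ℂ) • mfun t a b) := by
    intro s
    rw [C.map_add _ _ ((good_efun s a b).sub' (good_efun t a b))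
      ((good_mfun t a b).smul' _), Phi_sub C (good_efun s a b) (good_efun t a b),
      C.map_smul _ _ (good_mfun t a b), real_smul_clm]
    rw [smul_neg, sub_neg_eq_add]
  rw [Asymptotics.isLittleO_iff]
  intro c hc
  have hev : ∀ᶠ s in 𝓝 t, |s - t| * m ≤ 1 ∧ (m ^ 2 * E) * |s - t| ≤ c := by
    have h1 : Tendsto (fun s => |s - t| * m) (𝓝 t) (𝓝 0) := by
      have hst : Tendsto (fun s : ℝ => s - t) (𝓝 t) (𝓝 0) := by
        simpa using (continuous_sub_right t).tendsto t
      simpa using ((hst.abs).mul_const m)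
    have h2 : Tendsto (fun s => (m ^ 2 * E) * |s - t|) (𝓝 t) (𝓝 0) := by
      have hst : Tendsto (fun s : ℝ => s - t) (𝓝 t) (𝓝 0) := by
        simpa using (continuous_sub_right t).tendsto t
      simpa using (hst.abs).const_mul (m ^ 2 * E)
    filter_upwards [h1.eventually_lt_const (by norm_num : (0:ℝ) < 1),
      h2.eventually_lt_const hc] with s hs1 hs2
    exact ⟨hs1.le, hs2.le⟩
  filter_upwards [hev] with s ⟨hs1, hs2⟩
  rw [key s]
  have hb : ∀ x, ‖(efun s a b - efun t a b + ((s - t : ℝ) : ℂ) • mfun t a b) x‖ ≤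
      m ^ 2 * E * (s - t) ^ 2 := by
    intro x
    have := efun_diff_bound a b t (h := s - t) (by rw [← hm]; exact hs1) x
    rw [show t + (s - t) = s by ring] at this
    simpa using this
  refine le_trans (C.norm_le _ _ ?_ hb) ?_
  · exact (((measurable_efun s a b).sub (measurable_efun t a b)).add
      ((measurable_mfun t a b).const_smul _))
  · rw [Real.norm_eq_abs]
    calc m ^ 2 * E * (s - t) ^ 2 = ((m ^ 2 * E) * |s - t|) * |s - t| := by
          rw [← _root_.sq_abs (s - t)]; ring
      _ ≤ c * |s - t| := mul_le_mul_of_nonneg_right hs2 (abs_nonneg _)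

lemma continuous_Phi_efun (C : BorelCalculus ℋ) (a b : ℝ) :
    Continuous (fun s => C.Φ (efun s a b)) :=
  continuous_iff_continuousAt.2 fun t => (hasDerivAt_Phi C a b t).continuousAt


/-! ### The key algebraic identity from the resolvent identity -/

/-- `x ↦ (x - i) e^{-tx} 1_{(a,b)}(x)`. -/
def ufun (t a b : ℝ) : ℝ → ℂ := fun x => ((x : ℂ) - Complex.I) * efun t a b x

lemma good_ufun (t a b : ℝ) : Good (ufun t a b) := by
  have : ufun t a b = mfun t a b - Complex.I • efun t a b := by
    funext x; simp only [ufun, mfun, Pi.sub_apply, Pi.smul_apply, smul_eq_mul]; ring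
  rw [this]
  exact (good_mfun t a b).sub' ((good_efun t a b).smul' _)

lemma ufun_mul_res (t a b : ℝ) : ufun t a b * resolventFun = efun t a b := by
  funext x
  simp only [Pi.mul_apply, ufun, resolventFun]
  rw [mul_comm ((x:ℂ) - Complex.I) (efun t a b x), mul_assoc,
    mul_inv_cancel₀ (complex_sub_I_ne x), mul_one]

lemma res_mul_ufun (t a b : ℝ) : resolventFun * ufun t a b = efun t a b := by
  funext x
  simp only [Pi.mul_apply, ufun, resolventFun]
  rw [← mul_assoc, inv_mul_cancel₀ (complex_sub_I_ne x), one_mul]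

lemma Phi_ufun (C : BorelCalculus ℋ) (t a b : ℝ) :
    C.Φ (ufun t a b) = C.Φ (mfun t a b) - Complex.I • C.Φ (efun t a b) := by
  have : ufun t a b = mfun t a b - Complex.I • efun t a b := by
    funext x; simp only [ufun, mfun, Pi.sub_apply, Pi.smul_apply, smul_eq_mul]; ring
  rw [this, Phi_sub C (good_mfun t a b) ((good_efun t a b).smul' _),
    C.map_smul _ _ (good_efun t a b)]

lemma key_identity (C C0 : BorelCalculus ℋ) (W : ℋ →L[ℂ] ℋ)
    (hHC : IsPerturbationOf C C0 W) (t s a b a' b' : ℝ) :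
    C.Φ (efun t a b) ∘L W ∘L C0.Φ (efun s a' b') =
      C.Φ (mfun t a b) ∘L C0.Φ (efun s a' b') -
        C.Φ (efun t a b) ∘L C0.Φ (mfun s a' b') := by
  have hres : C.Φ resolventFun ∘L W ∘L C0.Φ resolventFun =
      C0.Φ resolventFun - C.Φ resolventFun := by
    have := hHC
    unfold IsPerturbationOf at this
    have h2 := congrArg Neg.neg this
    rw [neg_sub, neg_neg] at h2
    exact h2.symm
  have e1 : C.Φ (efun t a b) = C.Φ (ufun t a b) ∘L C.Φ resolventFun := by
    rw [← C.map_mul _ _ (good_ufun t a b) good_resolventFun, ufun_mul_res]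
  have e2 : C0.Φ (efun s a' b') = C0.Φ resolventFun ∘L C0.Φ (ufun s a' b') := by
    rw [← C0.map_mul _ _ good_resolventFun (good_ufun s a' b'), res_mul_ufun]
  calc C.Φ (efun t a b) ∘L W ∘L C0.Φ (efun s a' b')
      = C.Φ (ufun t a b) ∘L (C.Φ resolventFun ∘L W ∘L C0.Φ resolventFun) ∘L
          C0.Φ (ufun s a' b') := by
        rw [e1, e2]; rfl
    _ = C.Φ (ufun t a b) ∘L (C0.Φ resolventFun - C.Φ resolventFun) ∘L
          C0.Φ (ufun s a' b') := by rw [hres]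
    _ = C.Φ (ufun t a b) ∘L (C0.Φ resolventFun ∘L C0.Φ (ufun s a' b')) -
          (C.Φ (ufun t a b) ∘L C.Φ resolventFun) ∘L C0.Φ (ufun s a' b') := by
        rw [ContinuousLinearMap.sub_comp, ContinuousLinearMap.comp_sub]; rfl
    _ = C.Φ (ufun t a b) ∘L C0.Φ (efun s a' b') -
          C.Φ (efun t a b) ∘L C0.Φ (ufun s a' b') := by rw [← e1, ← e2]
    _ = C.Φ (mfun t a b) ∘L C0.Φ (efun s a' b') -
          C.Φ (efun t a b) ∘L C0.Φ (mfun s a' b') := by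
        rw [Phi_ufun C t a b, Phi_ufun C0 s a' b']
        rw [ContinuousLinearMap.sub_comp, ContinuousLinearMap.comp_sub,
          ContinuousLinearMap.smul_comp, ContinuousLinearMap.comp_smul]
        abel

/-! ### The operator-valued integral -/

variable (C C0 : BorelCalculus ℋ) (W : ℋ →L[ℂ] ℋ) (ε δ : ℝ)

/-- The integrand `B t = Φ(e^{-t·}1_{(ε,δ)}) W Φ₀(e^{t·}1_{(-δ,-ε)})`. -/
def Bop (t : ℝ) : ℋ →L[ℂ] ℋ :=
  C.Φ (efun t ε δ) ∘L W ∘L C0.Φ (efun (-t) (-δ) (-ε))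

/-- `K t = Φ(e^{-t·}1_{(ε,δ)}) Φ₀(e^{t·}1_{(-δ,-ε)})`. -/
def Kop (t : ℝ) : ℋ →L[ℂ] ℋ :=
  C.Φ (efun t ε δ) ∘L C0.Φ (efun (-t) (-δ) (-ε))

lemma continuous_Phi_efun_neg (a b : ℝ) :
    Continuous (fun t : ℝ => C0.Φ (efun (-t) a b)) :=
  (continuous_Phi_efun C0 a b).comp continuous_neg

lemma continuous_Bop : Continuous (Bop C C0 W ε δ) := by
  unfold Bop
  exact Continuous.clm_comp (continuous_Phi_efun C ε δ)
    (Continuous.clm_comp continuous_const (continuous_Phi_efun_neg C0 (-δ) (-ε)))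

lemma hasDerivAt_comp_neg' {F : Type*} [NormedAddCommGroup F] [NormedSpace ℝ F]
    {g : ℝ → F} {D : F} (t : ℝ) (hg : HasDerivAt g D (-t)) :
    HasDerivAt (fun s : ℝ => g (-s)) (-D) t := by
  have := HasDerivAt.scomp (𝕜 := ℝ) (𝕜' := ℝ) t hg (hasDerivAt_neg t)
  simpa [Function.comp_def] using this

lemma hasDerivAt_Kop (hHC : IsPerturbationOf C C0 W) (t : ℝ) :
    HasDerivAt (Kop C C0 ε δ) (-(Bop C C0 W ε δ t)) t := by
  have h1 : HasDerivAt (fun s => C.Φ (efun s ε δ)) (-(C.Φ (mfun t ε δ))) t :=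
    hasDerivAt_Phi C ε δ t
  have h2 : HasDerivAt (fun s : ℝ => C0.Φ (efun (-s) (-δ) (-ε))) (C0.Φ (mfun (-t) (-δ) (-ε))) t := by
    have := hasDerivAt_comp_neg' t (hasDerivAt_Phi C0 (-δ) (-ε) (-t))
    simpa using this
  have := h1.mul h2
  refine HasDerivAt.congr_deriv (f := Kop C C0 ε δ) this ?_
  unfold Bop
  rw [key_identity C C0 W hHC t (-t) ε δ (-δ) (-ε)]
  ext v
  simp only [ContinuousLinearMap.neg_apply, ContinuousLinearMap.add_apply,
    ContinuousLinearMap.sub_apply, ContinuousLinearMap.mul_apply,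
    ContinuousLinearMap.coe_comp', Function.comp_apply]
  abel

lemma norm_Phi_efun_pos (hε : 0 < ε) (hεδ : ε ≤ δ) {t : ℝ} (ht : 0 ≤ t) :
    ‖C.Φ (efun t ε δ)‖ ≤ Real.exp (-(ε * t)) := by
  refine le_trans (norm_Phi_efun_le C t ε δ) (Real.exp_le_exp.2 ?_)
  rw [max_le_iff]
  constructor <;> nlinarith

lemma norm_Phi_efun_neg' (hε : 0 < ε) (hεδ : ε ≤ δ) {t : ℝ} (ht : 0 ≤ t) :
    ‖C0.Φ (efun (-t) (-δ) (-ε))‖ ≤ Real.exp (-(ε * t)) := by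
  refine le_trans (norm_Phi_efun_le C0 (-t) (-δ) (-ε)) (Real.exp_le_exp.2 ?_)
  rw [max_le_iff]
  constructor <;> nlinarith

lemma norm_Bop_le (hε : 0 < ε) (hεδ : ε ≤ δ) {t : ℝ} (ht : 0 ≤ t) :
    ‖Bop C C0 W ε δ t‖ ≤ ‖W‖ * Real.exp (-(2 * ε) * t) := by
  unfold Bop
  calc ‖C.Φ (efun t ε δ) ∘L W ∘L C0.Φ (efun (-t) (-δ) (-ε))‖
      ≤ ‖C.Φ (efun t ε δ)‖ * ‖W ∘L C0.Φ (efun (-t) (-δ) (-ε))‖ :=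
        ContinuousLinearMap.opNorm_comp_le _ _
    _ ≤ ‖C.Φ (efun t ε δ)‖ * (‖W‖ * ‖C0.Φ (efun (-t) (-δ) (-ε))‖) := by
        apply mul_le_mul_of_nonneg_left (ContinuousLinearMap.opNorm_comp_le _ _)
          (norm_nonneg _)
    _ ≤ Real.exp (-(ε * t)) * (‖W‖ * Real.exp (-(ε * t))) := by
        apply mul_le_mul (norm_Phi_efun_pos C ε δ hε hεδ ht)
          (mul_le_mul_of_nonneg_left (norm_Phi_efun_neg' C0 ε δ hε hεδ ht) (norm_nonneg _))
          (by positivity) (Real.exp_pos _).le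
    _ = ‖W‖ * Real.exp (-(2 * ε) * t) := by
        rw [show Real.exp (-(ε * t)) * (‖W‖ * Real.exp (-(ε * t))) =
          ‖W‖ * (Real.exp (-(ε * t)) * Real.exp (-(ε * t))) from by ring, ← Real.exp_add]
        ring_nf
  
lemma norm_Kop_le (hε : 0 < ε) (hεδ : ε ≤ δ) {t : ℝ} (ht : 0 ≤ t) :
    ‖Kop C C0 ε δ t‖ ≤ Real.exp (-(2 * ε) * t) := by
  unfold Kop
  calc ‖C.Φ (efun t ε δ) ∘L C0.Φ (efun (-t) (-δ) (-ε))‖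
      ≤ ‖C.Φ (efun t ε δ)‖ * ‖C0.Φ (efun (-t) (-δ) (-ε))‖ :=
        ContinuousLinearMap.opNorm_comp_le _ _
    _ ≤ Real.exp (-(ε * t)) * Real.exp (-(ε * t)) :=
        mul_le_mul (norm_Phi_efun_pos C ε δ hε hεδ ht)
          (norm_Phi_efun_neg' C0 ε δ hε hεδ ht) (norm_nonneg _) (Real.exp_pos _).le
    _ = Real.exp (-(2 * ε) * t) := by rw [← Real.exp_add]; ring_nf

lemma integrable_Bop (hε : 0 < ε) (hεδ : ε ≤ δ) :
    Integrable (Bop C C0 W ε δ) (volume.restrict (Set.Ioi (0:ℝ))) := by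
  apply Integrable.mono' ((exp_neg_integrableOn_Ioi 0 (by positivity : (0:ℝ) < 2 * ε)).const_mul ‖W‖)
  · exact (continuous_Bop C C0 W ε δ).aestronglyMeasurable
  · filter_upwards [ae_restrict_mem measurableSet_Ioi] with t ht
    exact norm_Bop_le C C0 W ε δ hε hεδ (le_of_lt ht)

lemma efun_zero (a b : ℝ) : efun 0 a b = iooFun a b := by
  funext x
  unfold efun
  norm_num

lemma tendsto_Kop_zero (hε : 0 < ε) (hεδ : ε ≤ δ) :
    Tendsto (Kop C C0 ε δ) atTop (𝓝 0) := by
  refine squeeze_zero_norm' (a := fun t => Real.exp (-(2 * ε) * t)) ?_ ?_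
  · filter_upwards [eventually_ge_atTop (0:ℝ)] with t ht
    exact norm_Kop_le C C0 ε δ hε hεδ ht
  · have hmono : Tendsto (fun t : ℝ => (2 * ε) * t) atTop atTop :=
      Tendsto.const_mul_atTop (by positivity) tendsto_id
    have h2 := Real.tendsto_exp_neg_atTop_nhds_zero.comp hmono
    have heq : (fun t : ℝ => Real.exp (-(2 * ε) * t)) =
        (fun x => Real.exp (-x)) ∘ fun t : ℝ => 2 * ε * t := by
      funext t; simp [Function.comp, neg_mul]
    rw [heq]; exact h2

lemma integral_Bop (hHC : IsPerturbationOf C C0 W) (hε : 0 < ε) (hεδ : ε ≤ δ) :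
    ∫ t in Set.Ioi (0:ℝ), Bop C C0 W ε δ t =
      C.Φ (iooFun ε δ) ∘L C0.Φ (iooFun (-δ) (-ε)) := by
  have hint := integrable_Bop C C0 W ε δ hε hεδ
  have hstep : ∀ T : ℝ, ∫ t in (0:ℝ)..T, Bop C C0 W ε δ t =
      Kop C C0 ε δ 0 - Kop C C0 ε δ T := by
    intro T
    have hiint : IntervalIntegrable (fun t => -(Bop C C0 W ε δ t)) volume 0 T :=
      ((continuous_Bop C C0 W ε δ).neg).intervalIntegrable 0 T
    have := intervalIntegral.integral_eq_sub_of_hasDerivAt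
      (f := Kop C C0 ε δ) (f' := fun t => -(Bop C C0 W ε δ t))
      (fun t _ => hasDerivAt_Kop C C0 W ε δ hHC t) hiint
    rw [intervalIntegral.integral_neg] at this
    have := congrArg Neg.neg this
    rw [neg_neg, neg_sub] at this
    exact this
  have h1 : Tendsto (fun T : ℝ => ∫ t in (0:ℝ)..T, Bop C C0 W ε δ t) atTop
      (𝓝 (∫ t in Set.Ioi (0:ℝ), Bop C C0 W ε δ t)) :=
    intervalIntegral_tendsto_integral_Ioi 0 hint tendsto_id
  have h2 : Tendsto (fun T : ℝ => ∫ t in (0:ℝ)..T, Bop C C0 W ε δ t) atTop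
      (𝓝 (Kop C C0 ε δ 0)) := by
    have := (tendsto_const_nhds (x := Kop C C0 ε δ 0) (f := atTop (α := ℝ))).sub
      (tendsto_Kop_zero C C0 ε δ hε hεδ)
    rw [sub_zero] at this
    exact this.congr fun T => (hstep T).symm
  have := tendsto_nhds_unique h1 h2
  rw [this]
  unfold Kop
  rw [neg_zero, efun_zero, efun_zero]


/-! ### Identification of the adjoint of `Z0` -/

lemma aesm_apply {A : ℝ → ℋ →L[ℂ] ℋ} (hA : Continuous A) {μ : Measure ℝ} {g : ℝ → ℋ}
    (hg : AEStronglyMeasurable g μ) : AEStronglyMeasurable (fun t => A t (g t)) μ :=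
  isBoundedBilinearMap_apply.continuous.comp_aestronglyMeasurable
    (hA.aestronglyMeasurable.prodMk hg)

lemma memL2_exp (a : ℝ) (ha : 0 < a) :
    MemLp (fun t : ℝ => Real.exp (-a * t)) 2 (volume.restrict (Set.Ioi 0)) := by
  have hcont : Continuous (fun t : ℝ => Real.exp (-a * t)) := by fun_prop
  rw [memLp_two_iff_integrable_sq_norm hcont.aestronglyMeasurable]
  apply Integrable.mono' (exp_neg_integrableOn_Ioi 0 (by positivity : (0:ℝ) < 2 * a))
  · exact (hcont.norm.pow 2).aestronglyMeasurable
  · filter_upwards with t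
    rw [Real.norm_eq_abs, Real.norm_eq_abs,
      _root_.abs_of_nonneg (by positivity : (0:ℝ) ≤ |Real.exp (-a * t)| ^ 2),
      _root_.sq_abs, sq, ← Real.exp_add]
    exact le_of_eq (by congr 1; ring)

lemma norm_adjoint_eq (G : ℋ →L[ℂ] 𝒦) : ‖ContinuousLinearMap.adjoint G‖ = ‖G‖ :=
  LinearIsometryEquiv.norm_map ContinuousLinearMap.adjoint G

lemma integrable_exp_mul_norm (a : ℝ) (ha : 0 < a)
    (f : Lp 𝒦 2 (volume.restrict (Set.Ioi (0:ℝ)))) :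
    Integrable (fun t => Real.exp (-a * t) * ‖f t‖) (volume.restrict (Set.Ioi (0:ℝ))) := by
  have he2 := memL2_exp a ha
  have hf2 : MemLp (fun t => ‖f t‖) 2 (volume.restrict (Set.Ioi (0:ℝ))) := (Lp.memLp f).norm
  have hinner := L2.integrable_inner (𝕜 := ℝ) (he2.toLp _) (hf2.toLp _)
  apply hinner.congr
  filter_upwards [he2.coeFn_toLp, hf2.coeFn_toLp] with t h1 h2
  rw [RCLike.inner_apply, h1, h2]
  simp [mul_comm]

lemma adjoint_Z0_apply (C0 : BorelCalculus ℋ) (G : ℋ →L[ℂ] 𝒦) {ε δ : ℝ} (hε : 0 < ε)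
    (hεδ : ε ≤ δ) (Z0 : Lp 𝒦 2 (volume.restrict (Set.Ioi (0:ℝ))) →L[ℂ] ℋ)
    (hZ0 : ∀ f, Z0 f = Z0fun C0 G ε δ f) (v : ℋ) :
    ∃ hw : MemLp (fun t : ℝ => G ((C0.Φ (efun (-t) (-δ) (-ε))) v)) 2
        (volume.restrict (Set.Ioi (0:ℝ))),
      ContinuousLinearMap.adjoint Z0 v = hw.toLp _ := by
  set w : ℝ → 𝒦 := fun t => G ((C0.Φ (efun (-t) (-δ) (-ε))) v) with hwdef
  have hwcont : Continuous w :=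
    G.continuous.comp (Continuous.clm_apply (continuous_Phi_efun_neg C0 (-δ) (-ε))
      continuous_const)
  have hwbound : ∀ t : ℝ, 0 ≤ t → ‖w t‖ ≤ (‖G‖ * ‖v‖) * Real.exp (-ε * t) := by
    intro t ht
    calc ‖w t‖ ≤ ‖G‖ * ‖(C0.Φ (efun (-t) (-δ) (-ε))) v‖ := G.le_opNorm _
      _ ≤ ‖G‖ * (‖C0.Φ (efun (-t) (-δ) (-ε))‖ * ‖v‖) :=
          mul_le_mul_of_nonneg_left (ContinuousLinearMap.le_opNorm _ _) (norm_nonneg G)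
      _ ≤ ‖G‖ * (Real.exp (-(ε * t)) * ‖v‖) := by
          apply mul_le_mul_of_nonneg_left _ (norm_nonneg G)
          exact mul_le_mul_of_nonneg_right (norm_Phi_efun_neg' C0 ε δ hε hεδ ht)
            (norm_nonneg v)
      _ = (‖G‖ * ‖v‖) * Real.exp (-ε * t) := by ring_nf
  have hw : MemLp w 2 (volume.restrict (Set.Ioi (0:ℝ))) := by
    rw [memLp_two_iff_integrable_sq_norm hwcont.aestronglyMeasurable]
    apply Integrable.mono'
      ((exp_neg_integrableOn_Ioi 0 (by positivity : (0:ℝ) < 2 * ε)).const_mul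
        ((‖G‖ * ‖v‖) ^ 2))
    · exact (hwcont.norm.pow 2).aestronglyMeasurable
    · filter_upwards [ae_restrict_mem measurableSet_Ioi] with t ht
      have h1 := hwbound t (le_of_lt ht)
      rw [Real.norm_eq_abs, _root_.abs_of_nonneg (by positivity : (0:ℝ) ≤ ‖w t‖ ^ 2)]
      calc ‖w t‖ ^ 2 ≤ ((‖G‖ * ‖v‖) * Real.exp (-ε * t)) ^ 2 := by
            nlinarith [norm_nonneg (w t)]
        _ = (‖G‖ * ‖v‖) ^ 2 * Real.exp (-(2 * ε) * t) := by
            rw [mul_pow, sq (Real.exp _), ← Real.exp_add]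
            congr 2
            ring
  refine ⟨hw, ?_⟩
  apply ext_inner_left ℂ
  intro f
  rw [ContinuousLinearMap.adjoint_inner_right, hZ0 f]
  have hfun : ∀ t : ℝ, (fun x : ℝ => Complex.exp (t * x) * iooFun (-δ) (-ε) x) =
      efun (-t) (-δ) (-ε) := by
    intro t; funext x; unfold efun; push_cast; ring_nf
  unfold Z0fun
  simp_rw [hfun]
  set F : ℝ → ℋ := fun t =>
    (C0.Φ (efun (-t) (-δ) (-ε))) ((ContinuousLinearMap.adjoint G) (f t)) with hFdef
  have hFmeas : AEStronglyMeasurable F (volume.restrict (Set.Ioi (0:ℝ))) :=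
    aesm_apply (continuous_Phi_efun_neg C0 (-δ) (-ε))
      ((ContinuousLinearMap.adjoint G).continuous.comp_aestronglyMeasurable
        (Lp.aestronglyMeasurable f))
  have hFint : Integrable F (volume.restrict (Set.Ioi (0:ℝ))) := by
    apply Integrable.mono' ((integrable_exp_mul_norm ε hε f).const_mul ‖G‖)
    · exact hFmeas
    · filter_upwards [ae_restrict_mem measurableSet_Ioi] with t ht
      calc ‖F t‖ ≤ ‖C0.Φ (efun (-t) (-δ) (-ε))‖ * ‖(ContinuousLinearMap.adjoint G) (f t)‖ :=
            ContinuousLinearMap.le_opNorm _ _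
        _ ≤ Real.exp (-(ε * t)) * (‖G‖ * ‖f t‖) := by
            apply mul_le_mul (norm_Phi_efun_neg' C0 ε δ hε hεδ (le_of_lt ht))
            · calc ‖(ContinuousLinearMap.adjoint G) (f t)‖ ≤
                  ‖ContinuousLinearMap.adjoint G‖ * ‖f t‖ := ContinuousLinearMap.le_opNorm _ _
                _ = ‖G‖ * ‖f t‖ := by rw [norm_adjoint_eq]
            · exact norm_nonneg _
            · exact (Real.exp_pos _).le
        _ = ‖G‖ * (Real.exp (-ε * t) * ‖f t‖) := by ring_nf
  have hswap : (inner ℂ (∫ t in Set.Ioi (0:ℝ), F t) v : ℂ) =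
      ∫ t in Set.Ioi (0:ℝ), (inner ℂ (F t) v : ℂ) := by
    calc (inner ℂ (∫ t in Set.Ioi (0:ℝ), F t) v : ℂ)
        = starRingEnd ℂ (inner ℂ v (∫ t in Set.Ioi (0:ℝ), F t)) := (inner_conj_symm _ _).symm
      _ = starRingEnd ℂ (∫ t in Set.Ioi (0:ℝ), (inner ℂ v (F t) : ℂ)) := by
          rw [integral_inner hFint v]
      _ = ∫ t in Set.Ioi (0:ℝ), starRingEnd ℂ (inner ℂ v (F t) : ℂ) := by
          rw [integral_conj]
      _ = ∫ t in Set.Ioi (0:ℝ), (inner ℂ (F t) v : ℂ) := by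
          simp_rw [inner_conj_symm]
  rw [hswap]
  have hpt : ∀ t : ℝ, (inner ℂ (F t) v : ℂ) = inner ℂ (f t) (w t) := by
    intro t
    rw [hFdef]
    simp only []
    rw [← Phi_efun_selfAdjoint C0 (-t) (-δ) (-ε),
      ContinuousLinearMap.adjoint_inner_left,
      ContinuousLinearMap.adjoint_inner_left]
  simp_rw [hpt]
  rw [L2.inner_def]
  apply integral_congr_ae
  filter_upwards [hw.coeFn_toLp] with t ht
  rw [ht]

end Aux

/-- **Lemma (factorization)** of Frank–Pushnitski, *The spectral density of a product of
spectral projections* (formula (1.22)):  under Assumptions 1 and 2, for every `0 < ε ≤ δ`,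
`1_{(ε,δ)}(H) 1_{(-δ,-ε)}(H₀) = 𝒵_ε (𝒵_ε⁽⁰⁾)^*`. -/
theorem statement16
    {ℋ 𝒦 : Type*} [NormedAddCommGroup ℋ] [InnerProductSpace ℂ ℋ] [CompleteSpace ℋ]
    [TopologicalSpace.SeparableSpace ℋ]
    [NormedAddCommGroup 𝒦] [InnerProductSpace ℂ 𝒦] [CompleteSpace 𝒦]
    [TopologicalSpace.SeparableSpace 𝒦]
    -- the self-adjoint operators `H₀` and `H`, encoded by their Borel functional calculi
    (C0 C : BorelCalculus ℋ)
    -- `H₀` is lower semibounded, with lower bound `c`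
    (c : ℝ) (hc : C0.Φ (iioFun c) = 0)
    -- the perturbation `V = G^* V₀ G`
    (V₀ : 𝒦 →L[ℂ] 𝒦) (hV₀ : IsSelfAdjoint V₀) (G : ℋ →L[ℂ] 𝒦)
    -- `H = H₀ + V`
    (hHC : IsPerturbationOf C C0 (ContinuousLinearMap.adjoint G ∘L V₀ ∘L G))
    -- Assumption 1: `G (H₀+M)^{-1/2} ∈ 𝐒_∞`, `G (H₀+M)^{-1/2-m} ∈ 𝐒_{2p}`
    (p M m : ℝ) (hp : 1 ≤ p) (hM : -c < M) (hm : 0 ≤ m)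
    (hcompact : IsCompactOperator ⇑(G ∘L C0.Φ (resPowFun c M 0)))
    (hS2p : MemSchatten (2 * p) (G ∘L C0.Φ (resPowFun c M m)))
    -- Assumption 2: on `[-δ,δ]`, the derivatives `F₀'`, `F'` exist in `𝐒_p` norm and are
    -- Hölder continuous with a positive exponent
    (δ : ℝ) (hδ : 0 < δ) (F₀' F' : ℝ → 𝒦 →L[ℂ] 𝒦)
    (hd0 : ∀ lam ∈ Set.Icc (-δ) δ, HasSchattenDerivAt p (F₀ C0 G) (F₀' lam) lam)
    (hd : ∀ lam ∈ Set.Icc (-δ) δ, HasSchattenDerivAt p (Fop C G V₀) (F' lam) lam)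
    (hSp0 : ∀ lam ∈ Set.Icc (-δ) δ, MemSchatten p (F₀' lam))
    (hSp : ∀ lam ∈ Set.Icc (-δ) δ, MemSchatten p (F' lam))
    (κ CH : ℝ) (hκ : 0 < κ)
    (hHolder0 : SchattenHolderOn p F₀' δ κ CH) (hHolder : SchattenHolderOn p F' δ κ CH)
    (ε : ℝ) (hε : ε ∈ Set.Ioc (0:ℝ) δ)
    -- the operators 𝒵_ε and 𝒵_ε⁽⁰⁾
    (Z Z0 : Lp 𝒦 2 (volume.restrict (Set.Ioi (0:ℝ))) →L[ℂ] ℋ)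
    (hZ : ∀ f, Z f = Zfun C G V₀ ε δ f)
    (hZ0 : ∀ f, Z0 f = Z0fun C0 G ε δ f) :
    C.Φ (iooFun ε δ) ∘L C0.Φ (iooFun (-δ) (-ε)) =
      Z ∘L ContinuousLinearMap.adjoint Z0 := by
  obtain ⟨hε0, hεδ⟩ := hε
  apply ContinuousLinearMap.ext
  intro v
  obtain ⟨hw, hadj⟩ := adjoint_Z0_apply C0 G hε0 hεδ Z0 hZ0 v
  show (C.Φ (iooFun ε δ) ∘L C0.Φ (iooFun (-δ) (-ε))) v =
    Z (ContinuousLinearMap.adjoint Z0 v)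
  rw [hadj, hZ]
  have hL : C.Φ (iooFun ε δ) ∘L C0.Φ (iooFun (-δ) (-ε)) =
      ∫ t in Set.Ioi (0:ℝ),
        Bop C C0 (ContinuousLinearMap.adjoint G ∘L V₀ ∘L G) ε δ t :=
    (integral_Bop C C0 _ ε δ hHC hε0 hεδ).symm
  rw [hL, ContinuousLinearMap.integral_apply (integrable_Bop C C0 _ ε δ hε0 hεδ)]
  show _ = Zfun C G V₀ ε δ (hw.toLp _)
  unfold Zfun
  apply integral_congr_ae
  filter_upwards [hw.coeFn_toLp] with t ht
  rw [ht]
  show (C.Φ (efun t ε δ) ∘L (ContinuousLinearMap.adjoint G ∘L V₀ ∘L G) ∘L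
      C0.Φ (efun (-t) (-δ) (-ε))) v = _
  simp only [ContinuousLinearMap.comp_apply]
  rfl

end SpectralDensity
end
end
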